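/- arXiv:2501.07573 — 2 statements merged into one kernel-verified Lean document; each statement's English description precedes it below -/
import Mathlib

section
/- For all integers k,n ≥ 1 and 0 ≤ h ≤ (k−1)(n−1), the generalized Narayana numbers satisfy the symmetry N(k,n,h) = N(k,n,(k−1)(n−1)−h); that is, the number of standard Young tableaux of rectangular shape (n^k) with h ascents equals the number of those with (k−1)(n−1)−h ascents. -/
open Finset

/-- The set of cells of the Young diagram with row lengths `lam`
(rows and columns are 0-indexed). -/
def ydCells (lam : List ℕ) : Finset (ℕ × ℕ) :=
  (Finset.range lam.length).biUnion
    (fun r => (Finset.range (lam.getD r 0)).image (fun c => (r, c)))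

/-- `lam` is a partition: a weakly decreasing list of positive integers. -/
def IsPartition (lam : List ℕ) : Prop :=
  lam.Pairwise (· ≥ ·) ∧ ∀ x ∈ lam, 0 < x

/-- A standard Young tableau of shape `lam`: a filling of the cells of `lam` with the
numbers `1, …, lam.sum`, each used exactly once, increasing along rows and columns. -/
structure SYT (lam : List ℕ) where
  entry : ℕ × ℕ → ℕ
  zero_outside : ∀ p, p ∉ ydCells lam → entry p = 0
  bijOn : Set.BijOn entry (ydCells lam : Set (ℕ × ℕ)) (Set.Icc 1 lam.sum)
  row_incr : ∀ r c : ℕ, (r, c + 1) ∈ ydCells lam → entry (r, c) < entry (r, c + 1)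
  col_incr : ∀ r c : ℕ, (r + 1, c) ∈ ydCells lam → entry (r, c) < entry (r + 1, c)

open Classical in
/-- The descent set of a standard Young tableau: those `1 ≤ i ≤ N-1` such that the row of
`i` is strictly above (smaller index than) the row of `i+1`. -/
noncomputable def desSet (lam : List ℕ) (T : SYT lam) : Finset ℕ :=
  (Finset.Icc 1 (lam.sum - 1)).filter (fun i =>
    ∃ p ∈ ydCells lam, ∃ q ∈ ydCells lam,
      T.entry p = i ∧ T.entry q = i + 1 ∧ p.1 < q.1)

open Classical in
/-- The ascent set of a standard Young tableau: those `1 ≤ i ≤ N-1` such that the row of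
`i` is strictly below (larger index than) the row of `i+1`. -/
noncomputable def ascSet (lam : List ℕ) (T : SYT lam) : Finset ℕ :=
  (Finset.Icc 1 (lam.sum - 1)).filter (fun i =>
    ∃ p ∈ ydCells lam, ∃ q ∈ ydCells lam,
      T.entry p = i ∧ T.entry q = i + 1 ∧ q.1 < p.1)

open Classical in
/-- The high descent set: descents `i` such that moreover `i+1` lies strictly to the left
of `i`. -/
noncomputable def hdesSet (lam : List ℕ) (T : SYT lam) : Finset ℕ :=
  (Finset.Icc 1 (lam.sum - 1)).filter (fun i =>
    ∃ p ∈ ydCells lam, ∃ q ∈ ydCells lam,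
      T.entry p = i ∧ T.entry q = i + 1 ∧ p.1 < q.1 ∧ q.2 < p.2)

/-- The number of descents. -/
noncomputable def desNum (lam : List ℕ) (T : SYT lam) : ℕ := (desSet lam T).card

/-- The number of ascents. -/
noncomputable def ascNum (lam : List ℕ) (T : SYT lam) : ℕ := (ascSet lam T).card

/-- The number of high descents. -/
noncomputable def hdesNum (lam : List ℕ) (T : SYT lam) : ℕ := (hdesSet lam T).card

open Classical in
/-- `bounce lam T r s` is the number of `1 ≤ i ≤ N-1` such that `i` lies in (0-indexed)
row `r` and `i+1` lies in (0-indexed) row `s` of `T`. -/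
noncomputable def bounce (lam : List ℕ) (T : SYT lam) (r s : ℕ) : ℕ :=
  ((Finset.Icc 1 (lam.sum - 1)).filter (fun i =>
    ∃ p ∈ ydCells lam, ∃ q ∈ ydCells lam,
      T.entry p = i ∧ T.entry q = i + 1 ∧ p.1 = r ∧ q.1 = s)).card


namespace NarayanaAux

open Finset

variable {k n : ℕ}

lemma getD_replicate {r : ℕ} (h : r < k) : (List.replicate k n).getD r 0 = n := by
  simp [List.getD, List.getElem?_replicate, h]

lemma mem_cells {p : ℕ × ℕ} :
    p ∈ ydCells (List.replicate k n) ↔ p.1 < k ∧ p.2 < n := by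
  unfold ydCells
  simp only [Finset.mem_biUnion, Finset.mem_range, Finset.mem_image, List.length_replicate]
  constructor
  · rintro ⟨r, hr, c, hc, rfl⟩
    rw [getD_replicate hr] at hc
    exact ⟨hr, hc⟩
  · rintro ⟨h1, h2⟩
    exact ⟨p.1, h1, p.2, by rw [getD_replicate h1]; exact h2, rfl⟩

lemma sum_replicate' : (List.replicate k n).sum = k * n := by
  simp [List.sum_replicate]

lemma card_cells : (ydCells (List.replicate k n)).card = k * n := by
  have : ydCells (List.replicate k n) = Finset.range k ×ˢ Finset.range n := by
    ext p; simp [mem_cells, Finset.mem_product]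
  rw [this, Finset.card_product, Finset.card_range, Finset.card_range]

end NarayanaAux
namespace NarayanaAux

open Finset

variable {k n : ℕ}

lemma SYT.ext' {T T' : SYT (List.replicate k n)} (h : T.entry = T'.entry) : T = T' := by
  cases T; cases T'; simpa using h

variable (T : SYT (List.replicate k n))

lemma entry_mem {p : ℕ × ℕ} (hp : p ∈ ydCells (List.replicate k n)) :
    T.entry p ∈ Set.Icc 1 (k * n) := by
  have := T.bijOn.mapsTo hp
  rwa [sum_replicate'] at this

lemma entry_mono_row {r c c' : ℕ} (hcc : c ≤ c')
    (hq : (r, c') ∈ ydCells (List.replicate k n)) :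
    T.entry (r, c) ≤ T.entry (r, c') := by
  induction c', hcc using Nat.le_induction with
  | base => exact le_refl _
  | succ c' hcc ih =>
      have hq' : (r, c') ∈ ydCells (List.replicate k n) := by
        rw [mem_cells] at hq ⊢; exact ⟨hq.1, Nat.lt_of_succ_lt hq.2⟩
      exact le_trans (ih hq') (le_of_lt (T.row_incr r c' hq))

lemma entry_mono_col {r r' c : ℕ} (hrr : r ≤ r')
    (hq : (r', c) ∈ ydCells (List.replicate k n)) :
    T.entry (r, c) ≤ T.entry (r', c) := by
  induction r', hrr using Nat.le_induction with
  | base => exact le_refl _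
  | succ r' hrr ih =>
      have hq' : (r', c) ∈ ydCells (List.replicate k n) := by
        rw [mem_cells] at hq ⊢; exact ⟨Nat.lt_of_succ_lt hq.1, hq.2⟩
      exact le_trans (ih hq') (le_of_lt (T.col_incr r' c hq))

lemma entry_le_of_le {p q : ℕ × ℕ} (hq : q ∈ ydCells (List.replicate k n))
    (h1 : p.1 ≤ q.1) (h2 : p.2 ≤ q.2) :
    T.entry p ≤ T.entry q := by
  obtain ⟨r, c⟩ := p; obtain ⟨r', c'⟩ := q
  have hm : (r, c') ∈ ydCells (List.replicate k n) := by
    rw [mem_cells] at hq ⊢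
    exact ⟨lt_of_le_of_lt h1 hq.1, hq.2⟩
  exact le_trans (entry_mono_row T h2 hm) (entry_mono_col T h1 hq)

/-- The cell carrying entry `i`. -/
noncomputable def cellOf (i : ℕ) : ℕ × ℕ :=
  if h : i ∈ Set.Icc 1 (k * n) then
    (T.bijOn.surjOn (by rwa [sum_replicate'] : i ∈ Set.Icc 1 (List.replicate k n).sum)).choose
  else (0, 0)

lemma cellOf_spec {i : ℕ} (hi : i ∈ Set.Icc 1 (k * n)) :
    cellOf T i ∈ ydCells (List.replicate k n) ∧ T.entry (cellOf T i) = i := by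
  rw [cellOf, dif_pos hi]
  have h := (T.bijOn.surjOn
    (by rwa [sum_replicate'] : i ∈ Set.Icc 1 (List.replicate k n).sum)).choose_spec
  exact ⟨h.1, h.2⟩

lemma cellOf_mem {i : ℕ} (hi : i ∈ Set.Icc 1 (k * n)) :
    cellOf T i ∈ ydCells (List.replicate k n) := (cellOf_spec T hi).1

lemma entry_cellOf {i : ℕ} (hi : i ∈ Set.Icc 1 (k * n)) :
    T.entry (cellOf T i) = i := (cellOf_spec T hi).2

lemma cellOf_entry {p : ℕ × ℕ} (hp : p ∈ ydCells (List.replicate k n)) :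
    cellOf T (T.entry p) = p := by
  have hi := entry_mem T hp
  exact T.bijOn.injOn (cellOf_mem T hi) hp (entry_cellOf T hi)

lemma cellOf_inj {i j : ℕ} (hi : i ∈ Set.Icc 1 (k * n)) (hj : j ∈ Set.Icc 1 (k * n))
    (h : cellOf T i = cellOf T j) : i = j := by
  rw [← entry_cellOf T hi, ← entry_cellOf T hj, h]

end NarayanaAux
namespace NarayanaAux

open Finset

variable {k n : ℕ} (T : SYT (List.replicate k n))

lemma mem_Icc_succ {i : ℕ} (hi : i ∈ Finset.Icc 1 (k * n - 1)) :
    i ∈ Set.Icc 1 (k * n) ∧ i + 1 ∈ Set.Icc 1 (k * n) := by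
  rw [Finset.mem_Icc] at hi
  constructor <;> constructor <;> omega

/-- Characterization of the ascent set via `cellOf`. -/
lemma mem_ascSet_iff {i : ℕ} :
    i ∈ ascSet (List.replicate k n) T ↔
      i ∈ Finset.Icc 1 (k * n - 1) ∧ (cellOf T (i + 1)).1 < (cellOf T i).1 := by
  rw [ascSet, Finset.mem_filter, sum_replicate']
  constructor
  · rintro ⟨hIcc, p, hp, q, hq, hpi, hqi, hlt⟩
    have h2 := mem_Icc_succ (k := k) (n := n) hIcc
    have : p = cellOf T i := by
      rw [← hpi, cellOf_entry T hp]
    have hq' : q = cellOf T (i + 1) := by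
      rw [← hqi, cellOf_entry T hq]
    subst this; subst hq'
    exact ⟨hIcc, hlt⟩
  · rintro ⟨hIcc, hlt⟩
    have h2 := mem_Icc_succ (k := k) (n := n) hIcc
    exact ⟨hIcc, cellOf T i, cellOf_mem T h2.1, cellOf T (i + 1), cellOf_mem T h2.2,
      entry_cellOf T h2.1, entry_cellOf T h2.2, hlt⟩

/-- If `i` and `i+1` are in the same row, then `i` is strictly to the left. -/
lemma col_lt_of_row_eq {i j : ℕ} (hi : i ∈ Set.Icc 1 (k * n)) (hj : j ∈ Set.Icc 1 (k * n))
    (hij : i < j) (hrow : (cellOf T i).1 = (cellOf T j).1) :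
    (cellOf T i).2 < (cellOf T j).2 := by
  by_contra hc
  push_neg at hc
  have := entry_le_of_le T (cellOf_mem T hi) (le_of_eq hrow.symm) hc
  rw [entry_cellOf T hi, entry_cellOf T hj] at this
  omega

/-- In an ascent, `i+1` lies strictly to the right of `i`. -/
lemma col_lt_of_asc {i : ℕ} (hi : i ∈ ascSet (List.replicate k n) T) :
    (cellOf T i).2 < (cellOf T (i + 1)).2 := by
  rw [mem_ascSet_iff] at hi
  obtain ⟨hIcc, hrow⟩ := hi
  have h2 := mem_Icc_succ (k := k) (n := n) hIcc
  by_contra hc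
  push_neg at hc
  -- consider the cell (row of i+1, col of i)
  have hm : ((cellOf T (i+1)).1, (cellOf T i).2) ∈ ydCells (List.replicate k n) := by
    rw [mem_cells]
    have h1 := cellOf_mem T h2.1
    have h3 := cellOf_mem T h2.2
    rw [mem_cells] at h1 h3
    exact ⟨h3.1, h1.2⟩
  have hub : T.entry ((cellOf T (i+1)).1, (cellOf T i).2) < i := by
    have hle := entry_le_of_le T (p := ((cellOf T (i+1)).1, (cellOf T i).2))
      (q := cellOf T i) (cellOf_mem T h2.1) (le_of_lt hrow) (le_refl _)
    rw [entry_cellOf T h2.1] at hle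
    rcases lt_or_eq_of_le hle with h | h
    · exact h
    · exfalso
      have hEq : T.entry ((cellOf T (i+1)).1, (cellOf T i).2) = T.entry (cellOf T i) := by
        rw [h, entry_cellOf T h2.1]
      have hcells := T.bijOn.injOn hm (cellOf_mem T h2.1) hEq
      have hr := congrArg Prod.fst hcells
      simp only [] at hr
      omega
  have hlb : i + 1 ≤ T.entry ((cellOf T (i+1)).1, (cellOf T i).2) := by
    have := entry_le_of_le T (p := cellOf T (i+1)) hm (le_refl _) hc
    rwa [entry_cellOf T h2.2] at this
  omega

lemma ascSet_subset : ascSet (List.replicate k n) T ⊆ Finset.Icc 1 (k * n - 1) := by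
  intro i hi
  exact ((mem_ascSet_iff T).mp hi).1

/-- The key bound: `asc(T) ≤ (k-1)(n-1)`. -/
lemma ascNum_le : ascNum (List.replicate k n) T ≤ (k - 1) * (n - 1) := by
  have hmap : ∀ i ∈ ascSet (List.replicate k n) T,
      cellOf T (i + 1) ∈ Finset.range (k - 1) ×ˢ Finset.Ico 1 n := by
    intro i hi
    have hasc := (mem_ascSet_iff T).mp hi
    have h2 := mem_Icc_succ (k := k) (n := n) hasc.1
    have hcol := col_lt_of_asc T hi
    have hm1 := cellOf_mem T h2.1
    have hm2 := cellOf_mem T h2.2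
    rw [mem_cells] at hm1 hm2
    rw [Finset.mem_product, Finset.mem_range, Finset.mem_Ico]
    refine ⟨by omega, by omega, hm2.2⟩
  have hinj : Set.InjOn (fun i => cellOf T (i + 1))
      (ascSet (List.replicate k n) T : Set ℕ) := by
    intro i hi j hj hij
    have hi' := (mem_ascSet_iff T).mp hi
    have hj' := (mem_ascSet_iff T).mp hj
    have := cellOf_inj T (mem_Icc_succ (k := k) (n := n) hi'.1).2
      (mem_Icc_succ (k := k) (n := n) hj'.1).2 hij
    omega
  have := Finset.card_le_card_of_injOn _ hmap hinj
  rwa [Finset.card_product, Finset.card_range, Nat.card_Ico] at this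

/-- `SYT` is a finite type. -/
instance : Finite (SYT (List.replicate k n)) := by
  have : Function.Injective
      (fun T : SYT (List.replicate k n) =>
        (fun p : (ydCells (List.replicate k n) : Finset (ℕ × ℕ)) => T.entry p.1)) := by
    intro T T' h
    apply SYT.ext'
    funext p
    by_cases hp : p ∈ ydCells (List.replicate k n)
    · exact congrFun h ⟨p, hp⟩
    · rw [T.zero_outside p hp, T'.zero_outside p hp]
  -- target: functions from a finite type to ℕ... need bounded codomain
  have : Function.Injective
      (fun T : SYT (List.replicate k n) =>
        (fun p : (ydCells (List.replicate k n) : Finset (ℕ × ℕ)) =>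
          (⟨min (T.entry p.1) (k*n), Set.mem_Iic.mpr (min_le_right _ _)⟩ : Set.Iic (k*n)))) := by
    intro T T' h
    apply SYT.ext'
    funext p
    by_cases hp : p ∈ ydCells (List.replicate k n)
    · have := congrFun h ⟨p, hp⟩
      have h1 := entry_mem T hp
      have h2 := entry_mem T' hp
      simp only [Subtype.mk.injEq] at this
      rw [Set.mem_Icc] at h1 h2
      omega
    · rw [T.zero_outside p hp, T'.zero_outside p hp]
  exact Finite.of_injective _ this

end NarayanaAux
namespace NarayanaAux

open Finset

section Rank

variable {α : Type*} [DecidableEq α] (s : Finset α) (key : α → ℕ)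

/-- The rank of `p` in `s` with respect to the key `key`. -/
def rk (p : α) : ℕ := (s.filter (fun q => key q ≤ key p)).card

lemma rk_lt_rk {p q : α} (hq : q ∈ s) (h : key p < key q) : rk s key p < rk s key q := by
  apply Finset.card_lt_card
  constructor
  · intro x hx
    rw [Finset.mem_filter] at hx ⊢
    exact ⟨hx.1, le_trans hx.2 (le_of_lt h)⟩
  · intro hsub
    have : q ∈ s.filter (fun x => key x ≤ key q) := by
      rw [Finset.mem_filter]; exact ⟨hq, le_refl _⟩
    have := hsub this
    rw [Finset.mem_filter] at this
    omega

lemma rk_lt_iff (hinj : Set.InjOn key s) {p q : α} (hp : p ∈ s) (hq : q ∈ s) :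
    rk s key p < rk s key q ↔ key p < key q := by
  constructor
  · intro h
    by_contra hc
    push_neg at hc
    rcases lt_or_eq_of_le hc with h' | h'
    · have := rk_lt_rk s key hp h'
      omega
    · have : p = q := hinj hp hq h'.symm
      subst this; omega
  · exact rk_lt_rk s key hq

lemma rk_bijOn (hinj : Set.InjOn key s) :
    Set.BijOn (rk s key) s (Set.Icc 1 s.card) := by
  refine ⟨?_, ?_, ?_⟩
  · intro p hp
    constructor
    · rw [rk]
      have : p ∈ s.filter (fun q => key q ≤ key p) := by
        rw [Finset.mem_filter]; exact ⟨hp, le_refl _⟩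
      have := Finset.card_pos.mpr ⟨p, this⟩
      omega
    · exact Finset.card_le_card (Finset.filter_subset _ _)
  · intro p hp q hq h
    by_contra hne
    rcases Nat.lt_or_ge (key p) (key q) with h' | h'
    · have := rk_lt_rk s key hq h'; omega
    · rcases lt_or_eq_of_le h' with h'' | h''
      · have := rk_lt_rk s key hp h''; omega
      · exact hne (hinj hp hq h''.symm)
  · -- surjectivity via cardinality
    have hmaps : ∀ p ∈ s, rk s key p ∈ Finset.Icc 1 s.card := by
      intro p hp
      rw [Finset.mem_Icc]
      constructor
      · have : p ∈ s.filter (fun q => key q ≤ key p) := by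
          rw [Finset.mem_filter]; exact ⟨hp, le_refl _⟩
        have := Finset.card_pos.mpr ⟨p, this⟩
        rw [rk]; omega
      · exact Finset.card_le_card (Finset.filter_subset _ _)
    have hinj' : Set.InjOn (rk s key) s := by
      intro p hp q hq h
      by_contra hne
      rcases Nat.lt_or_ge (key p) (key q) with h' | h'
      · have := rk_lt_rk s key hq h'; omega
      · rcases lt_or_eq_of_le h' with h'' | h''
        · have := rk_lt_rk s key hp h''; omega
        · exact hne (hinj hp hq h''.symm)
    have hcard : (Finset.Icc 1 s.card).card ≤ s.card := by
      rw [Nat.card_Icc]; omega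
    intro j hj
    rw [Set.mem_Icc] at hj
    have hj' : j ∈ Finset.Icc 1 s.card := Finset.mem_Icc.mpr hj
    obtain ⟨p, hp, hpj⟩ := Finset.surj_on_of_inj_on_of_card_le
      (fun p _ => rk s key p) (fun p hp => hmaps p hp)
      (fun p q hp hq h => hinj' hp hq h) hcard j hj'
    exact ⟨p, hp, hpj.symm⟩

/-- Two bijections onto `Icc 1 s.card` inducing the same order are equal. -/
lemma entry_eq_of_same_order {e1 e2 : α → ℕ} {Nn : ℕ}
    (h1 : Set.BijOn e1 s (Set.Icc 1 Nn)) (h2 : Set.BijOn e2 s (Set.Icc 1 Nn))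
    (hord : ∀ p ∈ s, ∀ q ∈ s, (e1 p ≤ e1 q ↔ e2 p ≤ e2 q)) :
    ∀ p ∈ s, e1 p = e2 p := by
  have key : ∀ (e : α → ℕ), Set.BijOn e s (Set.Icc 1 Nn) →
      ∀ p ∈ s, (s.filter (fun q => e q ≤ e p)).card = e p := by
    intro e he p hp
    have hep := he.mapsTo hp
    rw [Set.mem_Icc] at hep
    have : (s.filter (fun q => e q ≤ e p)).card = (Finset.Icc 1 (e p)).card := by
      apply Finset.card_bij (fun q _ => e q)
      · intro q hq
        rw [Finset.mem_filter] at hq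
        have := he.mapsTo hq.1
        rw [Set.mem_Icc] at this
        rw [Finset.mem_Icc]
        exact ⟨this.1, hq.2⟩
      · intro q hq q' hq' h
        rw [Finset.mem_filter] at hq hq'
        exact he.injOn hq.1 hq'.1 h
      · intro j hj
        rw [Finset.mem_Icc] at hj
        obtain ⟨q, hq, hqj⟩ := he.surjOn (Set.mem_Icc.mpr ⟨hj.1, le_trans hj.2 hep.2⟩)
        refine ⟨q, ?_, hqj⟩
        rw [Finset.mem_filter]
        exact ⟨hq, by rw [hqj]; exact hj.2⟩
    rw [this, Nat.card_Icc]
    omega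
  intro p hp
  rw [← key e1 h1 p hp, ← key e2 h2 p hp]
  congr 1
  apply Finset.filter_congr
  intro q hq
  exact hord q hq p hp

end Rank

section Encode

/-- Encoding lemma: injectivity of base-B digit. -/
lemma enc_inj {B x y u v : ℕ} (hu : u < B) (hv : v < B) (h : x * B + u = y * B + v) :
    x = y ∧ u = v := by
  have hx : (x * B + u) % B = u := by
    rw [Nat.add_comm, Nat.add_mul_mod_self_right, Nat.mod_eq_of_lt hu]
  have hy : (y * B + v) % B = v := by
    rw [Nat.add_comm, Nat.add_mul_mod_self_right, Nat.mod_eq_of_lt hv]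
  have huv : u = v := by rw [← hx, ← hy, h]
  subst huv
  have hB : 0 < B := by omega
  constructor
  · have : x * B = y * B := by omega
    exact Nat.eq_of_mul_eq_mul_right hB this
  · rfl

lemma enc_lt {B x y u v : ℕ} (hu : u < B) (h : x < y ∨ (x = y ∧ u < v)) :
    x * B + u < y * B + v := by
  rcases h with h | ⟨rfl, h⟩
  · have : x * B + u < (x + 1) * B := by
      rw [Nat.succ_mul]; omega
    have h2 : (x + 1) * B ≤ y * B := Nat.mul_le_mul_right B h
    omega
  · omega

lemma enc_lt_iff {B x y u v : ℕ} (hu : u < B) (hv : v < B) :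
    x * B + u < y * B + v ↔ (x < y ∨ (x = y ∧ u < v)) := by
  constructor
  · intro h
    rcases Nat.lt_trichotomy x y with h' | h' | h'
    · exact Or.inl h'
    · subst h'; right; exact ⟨rfl, by omega⟩
    · exfalso
      have := enc_lt hv (Or.inl h' : y < x ∨ (y = x ∧ v < u))
      omega
  · exact enc_lt hu

end Encode

end NarayanaAux
namespace NarayanaAux

open Finset

/-- A chain: a weakly increasing sequence `a 1 ≤ … ≤ a N` with values in `[1,m]`,
strict at positions in `S`, and `0` outside `[1,N]`. -/
def IsChain (N m : ℕ) (S : Finset ℕ) (a : ℕ → ℕ) : Prop :=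
  (∀ i, ¬(1 ≤ i ∧ i ≤ N) → a i = 0) ∧
  (∀ i, 1 ≤ i → i ≤ N → 1 ≤ a i ∧ a i ≤ m) ∧
  (∀ i, 1 ≤ i → i + 1 ≤ N → a i ≤ a (i + 1)) ∧
  (∀ i ∈ S, a i < a (i + 1))

lemma mono_chain {N : ℕ} {a : ℕ → ℕ} (h : ∀ i, 1 ≤ i → i + 1 ≤ N → a i ≤ a (i + 1)) :
    ∀ i j, 1 ≤ i → i ≤ j → j ≤ N → a i ≤ a j := by
  intro i j h1 hij hjN
  induction j, hij using Nat.le_induction with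
  | base => exact le_refl _
  | succ j hij ih =>
      exact le_trans (ih (by omega)) (h j (by omega) hjN)

/-- Number of elements of `S` smaller than `i`. -/
def cnt (S : Finset ℕ) (i : ℕ) : ℕ := (S.filter (· < i)).card

lemma cnt_one {S : Finset ℕ} {x : ℕ} (hS : S ⊆ Finset.Icc 1 x) : cnt S 1 = 0 := by
  rw [cnt, Finset.card_eq_zero]
  rw [Finset.filter_eq_empty_iff]
  intro i hi
  have := hS hi
  rw [Finset.mem_Icc] at this
  omega

lemma cnt_succ (S : Finset ℕ) (i : ℕ) :
    cnt S (i + 1) = cnt S i + (if i ∈ S then 1 else 0) := by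
  rw [cnt, cnt]
  have : S.filter (· < i + 1) = (S.filter (· < i)) ∪ (S.filter (· = i)) := by
    ext j
    simp only [Finset.mem_union, Finset.mem_filter]
    constructor
    · rintro ⟨hj, hlt⟩
      rcases Nat.lt_or_ge j i with h | h
      · exact Or.inl ⟨hj, h⟩
      · exact Or.inr ⟨hj, by omega⟩
    · rintro (⟨hj, hlt⟩ | ⟨hj, rfl⟩)
      · exact ⟨hj, by omega⟩
      · exact ⟨hj, by omega⟩
  rw [this, Finset.card_union_of_disjoint]
  · congr 1
    by_cases hi : i ∈ S
    · rw [if_pos hi]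
      rw [Finset.filter_eq']
      try dsimp only
      rw [if_pos hi, Finset.card_singleton]
    · rw [if_neg hi]
      rw [Finset.filter_eq']
      rw [if_neg hi, Finset.card_empty]
  · rw [Finset.disjoint_filter]
    intro j _ hlt
    omega

lemma cnt_top {S : Finset ℕ} {N : ℕ} (hS : S ⊆ Finset.Icc 1 (N - 1)) (hN : 1 ≤ N) :
    cnt S N = S.card := by
  rw [cnt]
  congr 1
  rw [Finset.filter_true_of_mem]
  intro i hi
  have := hS hi
  rw [Finset.mem_Icc] at this
  omega

lemma cnt_le_card (S : Finset ℕ) (i : ℕ) : cnt S i ≤ S.card :=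
  Finset.card_le_card (Finset.filter_subset _ _)

lemma chain_gt_cnt {N m : ℕ} {S : Finset ℕ} {a : ℕ → ℕ} (hS : S ⊆ Finset.Icc 1 (N - 1))
    (ha : IsChain N m S a) : ∀ i, 1 ≤ i → i ≤ N → cnt S i < a i := by
  obtain ⟨hz, hb, hm, hs⟩ := ha
  intro i h1 hiN
  induction i with
  | zero => omega
  | succ i ih =>
      rcases Nat.eq_or_lt_of_le h1 with h | h
      · have h0 : i = 0 := by omega
        subst h0
        have hns : ¬ ((0:ℕ) ∈ S) := fun hc => by
          have := hS hc; rw [Finset.mem_Icc] at this; omega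
        rw [cnt_succ, if_neg hns]
        have hz0 : cnt S 0 = 0 := by
          rw [cnt, Finset.card_eq_zero, Finset.filter_eq_empty_iff]
          intro j _
          omega
        have := (hb 1 (le_refl _) hiN).1
        simp only [Nat.zero_add]
        omega
      · have hi1 : 1 ≤ i := by omega
        have hiN' : i ≤ N := by omega
        have ihi := ih hi1 hiN'
        rw [cnt_succ]
        by_cases hmem : i ∈ S
        · rw [if_pos hmem]
          have := hs i hmem
          omega
        · rw [if_neg hmem]
          have := hm i hi1 (by omega)
          omega

/-- Chains with strictness at `S` are equinumerous with free chains into `[1, m - |S|]`. -/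
noncomputable def chainEquiv (N m : ℕ) (S : Finset ℕ) (hS : S ⊆ Finset.Icc 1 (N - 1))
    (hN : 1 ≤ N) :
    {a : ℕ → ℕ // IsChain N m S a} ≃ {b : ℕ → ℕ // IsChain N (m - S.card) ∅ b} where
  toFun := fun ⟨a, ha⟩ => ⟨fun i => if 1 ≤ i ∧ i ≤ N then a i - cnt S i else 0, by
    obtain ⟨hz, hb, hm, hs⟩ := ha
    have hgt := chain_gt_cnt hS ⟨hz, hb, hm, hs⟩
    have hbmono : ∀ i, 1 ≤ i → i + 1 ≤ N → a i - cnt S i ≤ a (i + 1) - cnt S (i + 1) := by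
      intro i h1 h2
      rw [cnt_succ]
      by_cases hmem : i ∈ S
      · rw [if_pos hmem]
        have := hs i hmem
        have := hgt i h1 (by omega)
        omega
      · rw [if_neg hmem]
        have := hm i h1 h2
        have := hgt i h1 (by omega)
        omega
    have hbN : ∀ i, 1 ≤ i → i ≤ N → a i - cnt S i ≤ m - S.card := by
      intro i h1 h2
      have hchain := mono_chain (N := N) (a := fun i => a i - cnt S i) hbmono i N h1 h2 (le_refl _)
      have : a N - cnt S N ≤ m - S.card := by
        rw [cnt_top hS hN]
        have := (hb N hN (le_refl _)).2
        omega
      exact le_trans hchain this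
    refine ⟨?_, ?_, ?_, ?_⟩
    · intro i hi
      try dsimp only
      rw [if_neg hi]
    · intro i h1 h2
      try dsimp only
      rw [if_pos ⟨h1, h2⟩]
      have := hgt i h1 h2
      exact ⟨by omega, hbN i h1 h2⟩
    · intro i h1 h2
      try dsimp only
      rw [if_pos (⟨h1, by omega⟩ : 1 ≤ i ∧ i ≤ N),
        if_pos (⟨by omega, h2⟩ : 1 ≤ i + 1 ∧ i + 1 ≤ N)]
      exact hbmono i h1 h2
    · intro i hi
      exact absurd hi (Finset.notMem_empty i)⟩
  invFun := fun ⟨b, hb⟩ => ⟨fun i => if 1 ≤ i ∧ i ≤ N then b i + cnt S i else 0, by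
    obtain ⟨hz, hbnd, hm, _⟩ := hb
    have hmS : S.card + 1 ≤ m := by
      have h1 := (hbnd 1 (le_refl _) hN).1
      have h2 := (hbnd 1 (le_refl _) hN).2
      omega
    refine ⟨?_, ?_, ?_, ?_⟩
    · intro i hi
      try dsimp only
      rw [if_neg hi]
    · intro i h1 h2
      try dsimp only
      rw [if_pos ⟨h1, h2⟩]
      have h3 := (hbnd i h1 h2).1
      have h4 := (hbnd i h1 h2).2
      have h5 := cnt_le_card S i
      exact ⟨by omega, by omega⟩
    · intro i h1 h2
      try dsimp only
      rw [if_pos (⟨h1, by omega⟩ : 1 ≤ i ∧ i ≤ N),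
        if_pos (⟨by omega, h2⟩ : 1 ≤ i + 1 ∧ i + 1 ≤ N)]
      have := hm i h1 h2
      rw [cnt_succ]
      by_cases hmem : i ∈ S
      · rw [if_pos hmem]; omega
      · rw [if_neg hmem]; omega
    · intro i hi
      have hiI := hS hi
      rw [Finset.mem_Icc] at hiI
      try dsimp only
      rw [if_pos (⟨hiI.1, by omega⟩ : 1 ≤ i ∧ i ≤ N),
        if_pos (⟨by omega, by omega⟩ : 1 ≤ i + 1 ∧ i + 1 ≤ N)]
      have := hm i hiI.1 (by omega)
      rw [cnt_succ, if_pos hi]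
      omega⟩
  left_inv := fun ⟨a, ha⟩ => by
    have hgt := chain_gt_cnt hS ha
    apply Subtype.ext
    funext i
    by_cases hi : 1 ≤ i ∧ i ≤ N
    · simp only [if_pos hi]
      have := hgt i hi.1 hi.2
      omega
    · simp only [if_neg hi]
      exact (ha.1 i hi).symm
  right_inv := fun ⟨b, hb⟩ => by
    apply Subtype.ext
    funext i
    by_cases hi : 1 ≤ i ∧ i ≤ N
    · simp only [if_pos hi]
      omega
    · simp only [if_neg hi]
      exact (hb.1 i hi).symm

instance chainFinite (N m : ℕ) (S : Finset ℕ) : Finite {a : ℕ → ℕ // IsChain N m S a} := by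
  have hinj : Function.Injective
      (fun a : {a : ℕ → ℕ // IsChain N m S a} =>
        (fun i : (Finset.Icc 1 N : Finset ℕ) => (⟨min (a.1 i) m, by
          have := min_le_right (a.1 i) m; omega⟩ : Fin (m + 1)))) := by
    intro a a' h
    apply Subtype.ext
    funext i
    by_cases hi : 1 ≤ i ∧ i ≤ N
    · have := congrFun h ⟨i, Finset.mem_Icc.mpr hi⟩
      simp only [Fin.mk.injEq] at this
      have h1 := (a.2.2.1 i hi.1 hi.2).2
      have h2 := (a'.2.2.1 i hi.1 hi.2).2
      omega
    · rw [a.2.1 i hi, a'.2.1 i hi]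
  exact Finite.of_injective _ hinj

/-- The number of free chains. -/
noncomputable def w (N M : ℕ) : ℕ := Nat.card {a : ℕ → ℕ // IsChain N M ∅ a}

lemma w_zero {N : ℕ} (hN : 1 ≤ N) : w N 0 = 0 := by
  rw [w, Nat.card_eq_zero]
  left
  constructor
  intro a
  have := (a.2.2.1 1 (le_refl _) hN)
  omega

lemma w_one {N : ℕ} (hN : 1 ≤ N) : w N 1 = 1 := by
  rw [w]
  rw [Nat.card_eq_one_iff_unique]
  constructor
  · constructor
    intro a b
    apply Subtype.ext
    funext i
    by_cases hi : 1 ≤ i ∧ i ≤ N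
    · have h1 := a.2.2.1 i hi.1 hi.2
      have h2 := b.2.2.1 i hi.1 hi.2
      omega
    · rw [a.2.1 i hi, b.2.1 i hi]
  · exact ⟨⟨fun i => if 1 ≤ i ∧ i ≤ N then 1 else 0, by
      refine ⟨?_, ?_, ?_, ?_⟩
      · intro i hi
        try dsimp only
        rw [if_neg hi]
      · intro i h1 h2
        try dsimp only
        rw [if_pos (⟨h1, h2⟩ : 1 ≤ i ∧ i ≤ N)]
        omega
      · intro i h1 h2
        try dsimp only
        rw [if_pos (⟨h1, by omega⟩ : 1 ≤ i ∧ i ≤ N),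
          if_pos (⟨by omega, h2⟩ : 1 ≤ i + 1 ∧ i + 1 ≤ N)]
      · intro i hi; exact absurd hi (Finset.notMem_empty i)⟩⟩

/-- Cardinality of the set of chains strict at `S`. -/
lemma card_chains (N m : ℕ) (S : Finset ℕ) (hS : S ⊆ Finset.Icc 1 (N - 1)) (hN : 1 ≤ N) :
    Nat.card {a : ℕ → ℕ // IsChain N m S a} = w N (m - S.card) := by
  rw [w]
  exact Nat.card_congr (chainEquiv N m S hS hN)

end NarayanaAux
namespace NarayanaAux

open Finset

variable {k n : ℕ}

/-- A weakly increasing filling of the `k × n` grid with entries in `[1, m]`. -/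
def IsWeak (k n m : ℕ) (F : ℕ × ℕ → ℕ) : Prop :=
  (∀ p, p ∉ ydCells (List.replicate k n) → F p = 0) ∧
  (∀ p ∈ ydCells (List.replicate k n), 1 ≤ F p ∧ F p ≤ m) ∧
  (∀ r c, (r, c + 1) ∈ ydCells (List.replicate k n) → F (r, c) ≤ F (r, c + 1)) ∧
  (∀ r c, (r + 1, c) ∈ ydCells (List.replicate k n) → F (r, c) ≤ F (r + 1, c))

/-- A strictly increasing filling of the `k × n` grid with entries in `[1, m]`. -/
def IsStrict (k n m : ℕ) (F : ℕ × ℕ → ℕ) : Prop :=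
  (∀ p, p ∉ ydCells (List.replicate k n) → F p = 0) ∧
  (∀ p ∈ ydCells (List.replicate k n), 1 ≤ F p ∧ F p ≤ m) ∧
  (∀ r c, (r, c + 1) ∈ ydCells (List.replicate k n) → F (r, c) < F (r, c + 1)) ∧
  (∀ r c, (r + 1, c) ∈ ydCells (List.replicate k n) → F (r, c) < F (r + 1, c))

lemma weak_le {m : ℕ} {F : ℕ × ℕ → ℕ} (hF : IsWeak k n m F) {p q : ℕ × ℕ}
    (hq : q ∈ ydCells (List.replicate k n)) (h1 : p.1 ≤ q.1) (h2 : p.2 ≤ q.2) :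
    F p ≤ F q := by
  obtain ⟨r, c⟩ := p; obtain ⟨r', c'⟩ := q
  rw [mem_cells] at hq
  simp only at h1 h2 hq
  have hrow : ∀ c₀ c₁, c₀ ≤ c₁ → c₁ < n → ∀ r₀, r₀ < k → F (r₀, c₀) ≤ F (r₀, c₁) := by
    intro c₀ c₁ hc hcn r₀ hr
    induction c₁, hc using Nat.le_induction with
    | base => exact le_refl _
    | succ c₁ hc ih =>
        refine le_trans (ih (by omega)) (hF.2.2.1 r₀ c₁ ?_)
        rw [mem_cells]; exact ⟨hr, hcn⟩
  have hcol : ∀ r₀ r₁, r₀ ≤ r₁ → r₁ < k → ∀ c₀, c₀ < n → F (r₀, c₀) ≤ F (r₁, c₀) := by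
    intro r₀ r₁ hr hrk c₀ hcn
    induction r₁, hr using Nat.le_induction with
    | base => exact le_refl _
    | succ r₁ hr ih =>
        refine le_trans (ih (by omega)) (hF.2.2.2 r₁ c₀ ?_)
        rw [mem_cells]; exact ⟨hrk, hcn⟩
  exact le_trans (hrow c c' h2 hq.2 r (by omega)) (hcol r r' h1 hq.1 c' hq.2)

lemma strict_le {m : ℕ} {F : ℕ × ℕ → ℕ} (hF : IsStrict k n m F) {p q : ℕ × ℕ}
    (hq : q ∈ ydCells (List.replicate k n)) (h1 : p.1 ≤ q.1) (h2 : p.2 ≤ q.2) :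
    F p + (q.1 - p.1) + (q.2 - p.2) ≤ F q := by
  obtain ⟨r, c⟩ := p; obtain ⟨r', c'⟩ := q
  rw [mem_cells] at hq
  simp only at h1 h2 hq ⊢
  have hrow : ∀ c₀ c₁, c₀ ≤ c₁ → c₁ < n → ∀ r₀, r₀ < k →
      F (r₀, c₀) + (c₁ - c₀) ≤ F (r₀, c₁) := by
    intro c₀ c₁ hc hcn r₀ hr
    induction c₁, hc using Nat.le_induction with
    | base => omega
    | succ c₁ hc ih =>
        have h := hF.2.2.1 r₀ c₁ (by rw [mem_cells]; exact ⟨hr, hcn⟩)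
        have := ih (by omega)
        omega
  have hcol : ∀ r₀ r₁, r₀ ≤ r₁ → r₁ < k → ∀ c₀, c₀ < n →
      F (r₀, c₀) + (r₁ - r₀) ≤ F (r₁, c₀) := by
    intro r₀ r₁ hr hrk c₀ hcn
    induction r₁, hr using Nat.le_induction with
    | base => omega
    | succ r₁ hr ih =>
        have h := hF.2.2.2 r₁ c₀ (by rw [mem_cells]; exact ⟨hrk, hcn⟩)
        have := ih (by omega)
        omega
  have h3 := hrow c c' h2 hq.2 r (by omega)
  have h4 := hcol r r' h1 hq.1 c' hq.2
  omega

/-- The shift bijection between strict and weak fillings. -/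
noncomputable def shiftEquiv (m : ℕ) (hk : 1 ≤ k) (hn : 1 ≤ n) :
    {F : ℕ × ℕ → ℕ // IsStrict k n (m + (k - 1) + (n - 1)) F} ≃
      {F : ℕ × ℕ → ℕ // IsWeak k n m F} where
  toFun := fun ⟨G, hG⟩ => ⟨fun p =>
      if p ∈ ydCells (List.replicate k n) then G p - p.1 - p.2 else 0, by
    have h00 : (0, 0) ∈ ydCells (List.replicate k n) := by
      rw [mem_cells]; exact ⟨hk, hn⟩
    have hKN : (k - 1, n - 1) ∈ ydCells (List.replicate k n) := by
      rw [mem_cells]; constructor <;> omega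
    have hlb : ∀ p ∈ ydCells (List.replicate k n), 1 + p.1 + p.2 ≤ G p := by
      intro p hp
      have := strict_le hG (p := ((0,0) : ℕ × ℕ)) hp (Nat.zero_le p.1) (Nat.zero_le p.2)
      have h1 := (hG.2.1 (0, 0) h00).1
      simp only [Nat.sub_zero] at this
      omega
    have hub : ∀ p ∈ ydCells (List.replicate k n), G p ≤ m + p.1 + p.2 := by
      intro p hp
      have hple := mem_cells.mp hp
      have := strict_le hG (p := p) hKN (by omega) (by omega)
      have h2 := (hG.2.1 (k - 1, n - 1) hKN).2
      simp only at this h2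
      omega
    refine ⟨?_, ?_, ?_, ?_⟩
    · intro p hp
      try dsimp only
      rw [if_neg hp]
    · intro p hp
      try dsimp only
      rw [if_pos hp]
      have := hlb p hp
      have := hub p hp
      constructor <;> omega
    · intro r c hq
      have hp : (r, c) ∈ ydCells (List.replicate k n) := by
        rw [mem_cells] at hq ⊢; exact ⟨hq.1, by omega⟩
      try dsimp only
      rw [if_pos hp, if_pos hq]
      have := hG.2.2.1 r c hq
      have := hlb _ hp
      simp only at *
      omega
    · intro r c hq
      have hp : (r, c) ∈ ydCells (List.replicate k n) := by
        rw [mem_cells] at hq ⊢; exact ⟨by omega, hq.2⟩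
      try dsimp only
      rw [if_pos hp, if_pos hq]
      have := hG.2.2.2 r c hq
      have := hlb _ hp
      simp only at *
      omega⟩
  invFun := fun ⟨F, hF⟩ => ⟨fun p =>
      if p ∈ ydCells (List.replicate k n) then F p + p.1 + p.2 else 0, by
    refine ⟨?_, ?_, ?_, ?_⟩
    · intro p hp
      try dsimp only
      rw [if_neg hp]
    · intro p hp
      try dsimp only
      rw [if_pos hp]
      have h1 := hF.2.1 p hp
      have := mem_cells.mp hp
      constructor <;> omega
    · intro r c hq
      have hp : (r, c) ∈ ydCells (List.replicate k n) := by
        rw [mem_cells] at hq ⊢; exact ⟨hq.1, by omega⟩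
      try dsimp only
      rw [if_pos hp, if_pos hq]
      have := hF.2.2.1 r c hq
      omega
    · intro r c hq
      have hp : (r, c) ∈ ydCells (List.replicate k n) := by
        rw [mem_cells] at hq ⊢; exact ⟨by omega, hq.2⟩
      try dsimp only
      rw [if_pos hp, if_pos hq]
      have := hF.2.2.2 r c hq
      omega⟩
  left_inv := fun ⟨G, hG⟩ => by
    have h00 : (0, 0) ∈ ydCells (List.replicate k n) := by
      rw [mem_cells]; exact ⟨hk, hn⟩
    have hlb : ∀ p ∈ ydCells (List.replicate k n), 1 + p.1 + p.2 ≤ G p := by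
      intro p hp
      have := strict_le hG (p := ((0,0) : ℕ × ℕ)) hp (Nat.zero_le p.1) (Nat.zero_le p.2)
      have h1 := (hG.2.1 (0, 0) h00).1
      simp only [Nat.sub_zero] at this
      omega
    apply Subtype.ext
    funext p
    by_cases hp : p ∈ ydCells (List.replicate k n)
    · simp only [if_pos hp]
      have := hlb p hp
      omega
    · simp only [if_neg hp]
      exact (hG.1 p hp).symm
  right_inv := fun ⟨F, hF⟩ => by
    apply Subtype.ext
    funext p
    by_cases hp : p ∈ ydCells (List.replicate k n)
    · simp only [if_pos hp]
      omega
    · simp only [if_neg hp]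
      exact (hF.1 p hp).symm

instance weakFinite (m : ℕ) : Finite {F : ℕ × ℕ → ℕ // IsWeak k n m F} := by
  have hinj : Function.Injective
      (fun F : {F : ℕ × ℕ → ℕ // IsWeak k n m F} =>
        (fun p : (ydCells (List.replicate k n) : Finset (ℕ × ℕ)) =>
          (⟨min (F.1 p.1) m, by have := min_le_right (F.1 p.1) m; omega⟩ : Fin (m + 1)))) := by
    intro F F' h
    apply Subtype.ext
    funext p
    by_cases hp : p ∈ ydCells (List.replicate k n)
    · have := congrFun h ⟨p, hp⟩
      simp only [Fin.mk.injEq] at this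
      have h1 := (F.2.2.1 p hp).2
      have h2 := (F'.2.2.1 p hp).2
      omega
    · rw [F.2.1 p hp, F'.2.1 p hp]
  exact Finite.of_injective _ hinj

instance strictFinite (m : ℕ) : Finite {F : ℕ × ℕ → ℕ // IsStrict k n m F} := by
  have hinj : Function.Injective
      (fun F : {F : ℕ × ℕ → ℕ // IsStrict k n m F} =>
        (fun p : (ydCells (List.replicate k n) : Finset (ℕ × ℕ)) =>
          (⟨min (F.1 p.1) m, by have := min_le_right (F.1 p.1) m; omega⟩ : Fin (m + 1)))) := by
    intro F F' h
    apply Subtype.ext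
    funext p
    by_cases hp : p ∈ ydCells (List.replicate k n)
    · have := congrFun h ⟨p, hp⟩
      simp only [Fin.mk.injEq] at this
      have h1 := (F.2.2.1 p hp).2
      have h2 := (F'.2.2.1 p hp).2
      omega
    · rw [F.2.1 p hp, F'.2.1 p hp]
  exact Finite.of_injective _ hinj

end NarayanaAux
namespace NarayanaAux

open Finset

variable {k n : ℕ}

/-- The filling associated to a tableau and a chain. -/
def toFill (T : SYT (List.replicate k n)) (a : ℕ → ℕ) : ℕ × ℕ → ℕ :=
  fun p => if p ∈ ydCells (List.replicate k n) then a (T.entry p) else 0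

lemma toFill_cell {T : SYT (List.replicate k n)} {a : ℕ → ℕ} {p : ℕ × ℕ}
    (hp : p ∈ ydCells (List.replicate k n)) : toFill T a p = a (T.entry p) := by
  rw [toFill, if_pos hp]

lemma toFill_cellOf {T : SYT (List.replicate k n)} {a : ℕ → ℕ} {i : ℕ}
    (hi : i ∈ Set.Icc 1 (k * n)) : toFill T a (cellOf T i) = a i := by
  rw [toFill_cell (cellOf_mem T hi), entry_cellOf T hi]

/-- Lexicographic key for the weak standardization: (value, row, column). -/
def keyW (k n : ℕ) (F : ℕ × ℕ → ℕ) (p : ℕ × ℕ) : ℕ := (F p * k + p.1) * n + p.2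

/-- Lexicographic key for the strict standardization: (value, reverse row, column). -/
def keyS (k n : ℕ) (F : ℕ × ℕ → ℕ) (p : ℕ × ℕ) : ℕ := (F p * k + (k - 1 - p.1)) * n + p.2

lemma keyW_lt_iff {F : ℕ × ℕ → ℕ} {p q : ℕ × ℕ} (hp : p ∈ ydCells (List.replicate k n))
    (hq : q ∈ ydCells (List.replicate k n)) :
    keyW k n F p < keyW k n F q ↔
      (F p < F q ∨ (F p = F q ∧ (p.1 < q.1 ∨ (p.1 = q.1 ∧ p.2 < q.2)))) := by
  rw [mem_cells] at hp hq
  rw [keyW, keyW, enc_lt_iff hp.2 hq.2, enc_lt_iff hp.1 hq.1]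
  constructor
  · rintro (( h | ⟨h1, h2⟩) | ⟨h, h2⟩)
    · exact Or.inl h
    · exact Or.inr ⟨h1, Or.inl h2⟩
    · obtain ⟨h1, h3⟩ := enc_inj hp.1 hq.1 h
      exact Or.inr ⟨h1, Or.inr ⟨h3, h2⟩⟩
  · rintro (h | ⟨h1, (h2 | ⟨h2, h3⟩)⟩)
    · exact Or.inl (Or.inl h)
    · exact Or.inl (Or.inr ⟨h1, h2⟩)
    · exact Or.inr ⟨by rw [h1, h2], h3⟩

lemma keyS_lt_iff {F : ℕ × ℕ → ℕ} {p q : ℕ × ℕ} (hp : p ∈ ydCells (List.replicate k n))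
    (hq : q ∈ ydCells (List.replicate k n)) :
    keyS k n F p < keyS k n F q ↔
      (F p < F q ∨ (F p = F q ∧ (q.1 < p.1 ∨ (p.1 = q.1 ∧ p.2 < q.2)))) := by
  rw [mem_cells] at hp hq
  have hb1 : k - 1 - p.1 < k := by omega
  have hb2 : k - 1 - q.1 < k := by omega
  rw [keyS, keyS, enc_lt_iff hp.2 hq.2, enc_lt_iff hb1 hb2]
  constructor
  · rintro (( h | ⟨h1, h2⟩) | ⟨h, h2⟩)
    · exact Or.inl h
    · exact Or.inr ⟨h1, Or.inl (by omega)⟩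
    · obtain ⟨h1, h3⟩ := enc_inj hb1 hb2 h
      exact Or.inr ⟨h1, Or.inr ⟨by omega, h2⟩⟩
  · rintro (h | ⟨h1, (h2 | ⟨h2, h3⟩)⟩)
    · exact Or.inl (Or.inl h)
    · exact Or.inl (Or.inr ⟨h1, by omega⟩)
    · exact Or.inr ⟨by rw [h1, h2], h3⟩

lemma keyW_injOn (F : ℕ × ℕ → ℕ) :
    Set.InjOn (keyW k n F) (ydCells (List.replicate k n)) := by
  intro p hp q hq h
  rw [Finset.mem_coe, mem_cells] at hp hq
  rw [keyW, keyW] at h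
  obtain ⟨h1, h2⟩ := enc_inj hp.2 hq.2 h
  obtain ⟨_, h4⟩ := enc_inj hp.1 hq.1 h1
  exact Prod.ext h4 h2

lemma keyS_injOn (F : ℕ × ℕ → ℕ) :
    Set.InjOn (keyS k n F) (ydCells (List.replicate k n)) := by
  intro p hp q hq h
  rw [Finset.mem_coe, mem_cells] at hp hq
  rw [keyS, keyS] at h
  have hb1 : k - 1 - p.1 < k := by omega
  have hb2 : k - 1 - q.1 < k := by omega
  obtain ⟨h1, h2⟩ := enc_inj hp.2 hq.2 h
  obtain ⟨_, h4⟩ := enc_inj hb1 hb2 h1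
  exact Prod.ext (by omega) h2

section Std

variable (key : (ℕ × ℕ → ℕ) → ℕ × ℕ → ℕ)

/-- Generic standardization: entries are ranks with respect to a key. -/
noncomputable def stdEntry (F : ℕ × ℕ → ℕ) : ℕ × ℕ → ℕ := fun p =>
  if p ∈ ydCells (List.replicate k n) then
    rk (ydCells (List.replicate k n)) (key F) p else 0

lemma stdEntry_bijOn (F : ℕ × ℕ → ℕ)
    (hinj : Set.InjOn (key F) (ydCells (List.replicate k n))) :
    Set.BijOn (stdEntry (k := k) (n := n) key F)
      (ydCells (List.replicate k n)) (Set.Icc 1 (k * n)) := by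
  have := rk_bijOn (ydCells (List.replicate k n)) (key F) hinj
  rw [card_cells] at this
  apply this.congr
  intro p hp
  rw [Finset.mem_coe] at hp
  rw [stdEntry, if_pos hp]

lemma stdEntry_lt_iff (F : ℕ × ℕ → ℕ)
    (hinj : Set.InjOn (key F) (ydCells (List.replicate k n))) {p q : ℕ × ℕ}
    (hp : p ∈ ydCells (List.replicate k n)) (hq : q ∈ ydCells (List.replicate k n)) :
    stdEntry (k := k) (n := n) key F p < stdEntry (k := k) (n := n) key F q ↔ key F p < key F q := by
  simp only [stdEntry, if_pos hp, if_pos hq]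
  exact rk_lt_iff _ _ hinj hp hq

end Std

end NarayanaAux
namespace NarayanaAux

open Finset

variable {k n : ℕ}

lemma keyW_step {m : ℕ} (T : SYT (List.replicate k n)) {a : ℕ → ℕ}
    (ha : IsChain (k * n) m (ascSet (List.replicate k n) T) a)
    {i : ℕ} (h1 : 1 ≤ i) (h2 : i + 1 ≤ k * n) :
    keyW k n (toFill T a) (cellOf T i) < keyW k n (toFill T a) (cellOf T (i + 1)) := by
  have hi : i ∈ Set.Icc 1 (k * n) := ⟨h1, by omega⟩
  have hi1 : (i + 1) ∈ Set.Icc 1 (k * n) := ⟨by omega, h2⟩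
  have hmem := cellOf_mem T hi
  have hmem1 := cellOf_mem T hi1
  rw [keyW_lt_iff hmem hmem1, toFill_cellOf hi, toFill_cellOf hi1]
  have hle : a i ≤ a (i + 1) := ha.2.2.1 i h1 h2
  rcases lt_or_eq_of_le hle with h | h
  · exact Or.inl h
  · right
    refine ⟨h, ?_⟩
    have hnotasc : i ∉ ascSet (List.replicate k n) T := by
      intro hc
      have := ha.2.2.2 i hc
      omega
    rw [mem_ascSet_iff] at hnotasc
    push_neg at hnotasc
    have hIcc : i ∈ Finset.Icc 1 (k * n - 1) := Finset.mem_Icc.mpr ⟨h1, by omega⟩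
    have hrow := hnotasc hIcc
    rcases lt_or_eq_of_le hrow with h' | h'
    · exact Or.inl h'
    · exact Or.inr ⟨h', col_lt_of_row_eq T hi hi1 (by omega) h'⟩

lemma keyW_chain {m : ℕ} (T : SYT (List.replicate k n)) {a : ℕ → ℕ}
    (ha : IsChain (k * n) m (ascSet (List.replicate k n) T) a)
    {i j : ℕ} (h1 : 1 ≤ i) (hij : i < j) (hj : j ≤ k * n) :
    keyW k n (toFill T a) (cellOf T i) < keyW k n (toFill T a) (cellOf T j) := by
  have : i + 1 ≤ j := hij
  induction j, this using Nat.le_induction with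
  | base => exact keyW_step T ha h1 hj
  | succ j hij ih =>
      exact lt_trans (ih (by omega) (by omega))
        (keyW_step T ha (by omega) (by omega))

lemma entry_le_iff_keyW {m : ℕ} (T : SYT (List.replicate k n)) {a : ℕ → ℕ}
    (ha : IsChain (k * n) m (ascSet (List.replicate k n) T) a)
    {p q : ℕ × ℕ} (hp : p ∈ ydCells (List.replicate k n))
    (hq : q ∈ ydCells (List.replicate k n)) :
    T.entry p ≤ T.entry q ↔ keyW k n (toFill T a) p ≤ keyW k n (toFill T a) q := by
  by_cases hpq : p = q
  · subst hpq; simp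
  · have hep := entry_mem T hp
    have heq := entry_mem T hq
    have hlt : ∀ p' q', p' ∈ ydCells (List.replicate k n) →
        q' ∈ ydCells (List.replicate k n) → T.entry p' < T.entry q' →
        keyW k n (toFill T a) p' < keyW k n (toFill T a) q' := by
      intro p' q' hp' hq' hlt
      have h1 := entry_mem T hp'
      have h2 := entry_mem T hq'
      have := keyW_chain T ha h1.1 hlt h2.2
      rwa [cellOf_entry T hp', cellOf_entry T hq'] at this
    constructor
    · intro h
      rcases lt_or_eq_of_le h with h' | h'
      · exact le_of_lt (hlt p q hp hq h')
      · exact le_of_eq (congrArg _ (T.bijOn.injOn hp hq h'))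
    · intro h
      by_contra hc
      push_neg at hc
      have := hlt q p hq hp hc
      omega

lemma toFill_isWeak {m : ℕ} (T : SYT (List.replicate k n)) {a : ℕ → ℕ}
    (ha : IsChain (k * n) m (ascSet (List.replicate k n) T) a) :
    IsWeak k n m (toFill T a) := by
  have hmono : ∀ p q, p ∈ ydCells (List.replicate k n) → q ∈ ydCells (List.replicate k n) →
      T.entry p < T.entry q → toFill T a p ≤ toFill T a q := by
    intro p q hp hq hlt
    rw [toFill_cell hp, toFill_cell hq]
    have h1 := entry_mem T hp
    have h2 := entry_mem T hq
    exact mono_chain ha.2.2.1 _ _ h1.1 (le_of_lt hlt) h2.2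
  refine ⟨?_, ?_, ?_, ?_⟩
  · intro p hp; rw [toFill, if_neg hp]
  · intro p hp
    rw [toFill_cell hp]
    have h1 := entry_mem T hp
    exact ha.2.1 _ h1.1 h1.2
  · intro r c hq
    have hp : (r, c) ∈ ydCells (List.replicate k n) := by
      rw [mem_cells] at hq ⊢; exact ⟨hq.1, by omega⟩
    exact hmono _ _ hp hq (T.row_incr r c hq)
  · intro r c hq
    have hp : (r, c) ∈ ydCells (List.replicate k n) := by
      rw [mem_cells] at hq ⊢; exact ⟨by omega, hq.2⟩
    exact hmono _ _ hp hq (T.col_incr r c hq)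

/-- Standardization of a weak filling. -/
noncomputable def stdW {m : ℕ} (F : ℕ × ℕ → ℕ) (hF : IsWeak k n m F) :
    SYT (List.replicate k n) where
  entry := stdEntry (keyW k n) F
  zero_outside := by
    intro p hp
    rw [stdEntry, if_neg hp]
  bijOn := by
    rw [sum_replicate']
    exact stdEntry_bijOn _ F (keyW_injOn F)
  row_incr := by
    intro r c hq
    have hp : (r, c) ∈ ydCells (List.replicate k n) := by
      rw [mem_cells] at hq ⊢; exact ⟨hq.1, by omega⟩
    rw [stdEntry_lt_iff _ F (keyW_injOn F) hp hq, keyW_lt_iff hp hq]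
    rcases lt_or_eq_of_le (hF.2.2.1 r c hq) with h | h
    · exact Or.inl h
    · exact Or.inr ⟨h, Or.inr ⟨rfl, by omega⟩⟩
  col_incr := by
    intro r c hq
    have hp : (r, c) ∈ ydCells (List.replicate k n) := by
      rw [mem_cells] at hq ⊢; exact ⟨by omega, hq.2⟩
    rw [stdEntry_lt_iff _ F (keyW_injOn F) hp hq, keyW_lt_iff hp hq]
    rcases lt_or_eq_of_le (hF.2.2.2 r c hq) with h | h
    · exact Or.inl h
    · exact Or.inr ⟨h, Or.inl (by omega)⟩

/-- The chain extracted from a weak filling. -/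
noncomputable def stdWa {m : ℕ} (F : ℕ × ℕ → ℕ) (hF : IsWeak k n m F) : ℕ → ℕ :=
  fun i => if 1 ≤ i ∧ i ≤ k * n then F (cellOf (stdW F hF) i) else 0

lemma stdW_key_lt {m : ℕ} (F : ℕ × ℕ → ℕ) (hF : IsWeak k n m F)
    {i : ℕ} (h1 : 1 ≤ i) (h2 : i + 1 ≤ k * n) :
    keyW k n F (cellOf (stdW F hF) i) < keyW k n F (cellOf (stdW F hF) (i + 1)) := by
  set T := stdW F hF with hT
  have hi : i ∈ Set.Icc 1 (k * n) := ⟨h1, by omega⟩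
  have hi1 : (i + 1) ∈ Set.Icc 1 (k * n) := ⟨by omega, h2⟩
  have hmem := cellOf_mem T hi
  have hmem1 := cellOf_mem T hi1
  have hent : T.entry (cellOf T i) < T.entry (cellOf T (i + 1)) := by
    rw [entry_cellOf T hi, entry_cellOf T hi1]; omega
  have : stdEntry (keyW k n) F (cellOf T i) < stdEntry (keyW k n) F (cellOf T (i + 1)) := hent
  exact (stdEntry_lt_iff _ F (keyW_injOn F) hmem hmem1).mp this

lemma stdWa_isChain {m : ℕ} (F : ℕ × ℕ → ℕ) (hF : IsWeak k n m F) :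
    IsChain (k * n) m (ascSet (List.replicate k n) (stdW F hF)) (stdWa F hF) := by
  set T := stdW F hF with hT
  refine ⟨?_, ?_, ?_, ?_⟩
  · intro i hi; rw [stdWa, if_neg hi]
  · intro i hi1 hi2
    rw [stdWa, if_pos ⟨hi1, hi2⟩]
    exact hF.2.1 _ (cellOf_mem T ⟨hi1, hi2⟩)
  · intro i hi1 hi2
    simp only [stdWa]
    rw [if_pos (show 1 ≤ i ∧ i ≤ k * n by omega), if_pos (show 1 ≤ i + 1 ∧ i + 1 ≤ k * n by omega)]
    have hkey := stdW_key_lt F hF hi1 hi2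
    rw [keyW_lt_iff (cellOf_mem T ⟨hi1, by omega⟩) (cellOf_mem T ⟨by omega, hi2⟩)] at hkey
    rcases hkey with h | ⟨h, _⟩
    · exact le_of_lt h
    · exact le_of_eq h
  · intro i hiasc
    have hIcc := ((mem_ascSet_iff T).mp hiasc).1
    have hrow := ((mem_ascSet_iff T).mp hiasc).2
    rw [Finset.mem_Icc] at hIcc
    have hkn : 1 ≤ k * n := by omega
    have h2 : i + 1 ≤ k * n := by omega
    simp only [stdWa]
    rw [if_pos (show 1 ≤ i ∧ i ≤ k * n by omega), if_pos (show 1 ≤ i + 1 ∧ i + 1 ≤ k * n by omega)]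
    have hkey := stdW_key_lt F hF hIcc.1 h2
    rw [keyW_lt_iff (cellOf_mem T ⟨hIcc.1, by omega⟩) (cellOf_mem T ⟨by omega, h2⟩)] at hkey
    rcases hkey with h | ⟨h, h' | ⟨h', _⟩⟩
    · exact h
    · omega
    · omega

/-- The weak standardization equivalence. -/
noncomputable def weakEquiv (m : ℕ) :
    (Σ T : SYT (List.replicate k n),
      {a : ℕ → ℕ // IsChain (k * n) m (ascSet (List.replicate k n) T) a})
      ≃ {F : ℕ × ℕ → ℕ // IsWeak k n m F} := by
  apply Equiv.ofBijective
    (fun x => (⟨toFill x.1 x.2.1, toFill_isWeak x.1 x.2.2⟩ :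
      {F : ℕ × ℕ → ℕ // IsWeak k n m F}))
  constructor
  · rintro ⟨T, a, ha⟩ ⟨T', a', ha'⟩ h
    have hFF : toFill T a = toFill T' a' := congrArg Subtype.val h
    have hb1 : Set.BijOn T.entry (ydCells (List.replicate k n)) (Set.Icc 1 (k * n)) := by
      have := T.bijOn; rwa [sum_replicate'] at this
    have hb2 : Set.BijOn T'.entry (ydCells (List.replicate k n)) (Set.Icc 1 (k * n)) := by
      have := T'.bijOn; rwa [sum_replicate'] at this
    have hord : ∀ p ∈ (ydCells (List.replicate k n) : Finset (ℕ × ℕ)),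
        ∀ q ∈ (ydCells (List.replicate k n) : Finset (ℕ × ℕ)),
        (T.entry p ≤ T.entry q ↔ T'.entry p ≤ T'.entry q) := by
      intro p hp q hq
      rw [entry_le_iff_keyW T ha hp hq, entry_le_iff_keyW T' ha' hp hq, hFF]
    have hent := entry_eq_of_same_order (ydCells (List.replicate k n)) hb1 hb2 hord
    have hTT : T = T' := by
      apply SYT.ext'
      funext p
      by_cases hp : p ∈ ydCells (List.replicate k n)
      · exact hent p hp
      · rw [T.zero_outside p hp, T'.zero_outside p hp]
    subst hTT
    have haa : a = a' := by
      funext i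
      by_cases hi : 1 ≤ i ∧ i ≤ k * n
      · have h1 : a i = toFill T a (cellOf T i) := (toFill_cellOf ⟨hi.1, hi.2⟩).symm
        have h2 : a' i = toFill T a' (cellOf T i) := (toFill_cellOf ⟨hi.1, hi.2⟩).symm
        rw [h1, h2, hFF]
      · rw [ha.1 i hi, ha'.1 i hi]
    subst haa
    rfl
  · rintro ⟨F, hF⟩
    refine ⟨⟨stdW F hF, stdWa F hF, stdWa_isChain F hF⟩, ?_⟩
    apply Subtype.ext
    funext p
    show toFill (stdW F hF) (stdWa F hF) p = F p
    by_cases hp : p ∈ ydCells (List.replicate k n)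
    · rw [toFill_cell hp]
      have hi := entry_mem (stdW F hF) hp
      simp only [stdWa]
      rw [if_pos (⟨hi.1, hi.2⟩ : 1 ≤ (stdW F hF).entry p ∧ (stdW F hF).entry p ≤ k * n),
        cellOf_entry _ hp]
    · simp only [toFill, if_neg hp]
      exact (hF.1 p hp).symm

end NarayanaAux
namespace NarayanaAux

open Finset

variable {k n : ℕ}

/-- The complement strictness set used for strict fillings. -/
noncomputable def coAsc (T : SYT (List.replicate k n)) : Finset ℕ :=
  Finset.Icc 1 (k * n - 1) \ ascSet (List.replicate k n) T

lemma coAsc_subset (T : SYT (List.replicate k n)) :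
    coAsc T ⊆ Finset.Icc 1 (k * n - 1) := Finset.sdiff_subset

lemma mem_coAsc {T : SYT (List.replicate k n)} {i : ℕ} :
    i ∈ coAsc T ↔ i ∈ Finset.Icc 1 (k * n - 1) ∧ i ∉ ascSet (List.replicate k n) T :=
  Finset.mem_sdiff

lemma card_coAsc (T : SYT (List.replicate k n)) (hk : 1 ≤ k) (hn : 1 ≤ n) :
    (coAsc T).card = (k * n - 1) - ascNum (List.replicate k n) T := by
  rw [coAsc, Finset.card_sdiff_of_subset (ascSet_subset T), Nat.card_Icc, ascNum]
  omega

/-- If all of `[e, e+d)` are ascents, the row of `e+d` is strictly above that of `e`. -/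
lemma all_asc_row (T : SYT (List.replicate k n)) :
    ∀ d e, 1 ≤ e → e + d ≤ k * n → 1 ≤ d →
      (∀ j, e ≤ j → j < e + d → j ∈ ascSet (List.replicate k n) T) →
      (cellOf T (e + d)).1 < (cellOf T e).1 := by
  intro d
  induction d with
  | zero => omega
  | succ d ih =>
      intro e he hed _ hall
      rcases Nat.eq_or_lt_of_le (show 1 ≤ d + 1 by omega) with h | h
      · have hd0 : d = 0 := by omega
        subst hd0
        have := ((mem_ascSet_iff T).mp (hall e (le_refl _) (by omega))).2
        simpa using this
      · have hd1 : 1 ≤ d := by omega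
        have hih := ih e he (by omega) hd1 (fun j hj hj' => hall j hj (by omega))
        have hlast := ((mem_ascSet_iff T).mp (hall (e + d) (by omega) (by omega))).2
        have : e + d + 1 = e + (d + 1) := by omega
        rw [this] at hlast
        omega

lemma exists_nonasc (T : SYT (List.replicate k n)) {e f : ℕ} (he : 1 ≤ e) (hef : e < f)
    (hf : f ≤ k * n) (hrow : ¬ (cellOf T f).1 < (cellOf T e).1) :
    ∃ j, e ≤ j ∧ j < f ∧ j ∈ coAsc T := by
  by_contra hc
  push_neg at hc
  have hall : ∀ j, e ≤ j → j < f → j ∈ ascSet (List.replicate k n) T := by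
    intro j hj hj'
    have hIcc : j ∈ Finset.Icc 1 (k * n - 1) := Finset.mem_Icc.mpr ⟨by omega, by omega⟩
    by_contra hna
    exact absurd (mem_coAsc.mpr ⟨hIcc, hna⟩) (fun hmem => by
      have := hc j hj hj' hmem; exact this)
  obtain ⟨d, rfl⟩ : ∃ d, f = e + (d + 1) := ⟨f - e - 1, by omega⟩
  exact hrow (all_asc_row T (d + 1) e he (by omega) (by omega) hall)

lemma toFill_isStrict {m : ℕ} (T : SYT (List.replicate k n)) {a : ℕ → ℕ}
    (ha : IsChain (k * n) m (coAsc T) a) :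
    IsStrict k n m (toFill T a) := by
  have hstrict : ∀ p q, p ∈ ydCells (List.replicate k n) → q ∈ ydCells (List.replicate k n) →
      T.entry p < T.entry q → ¬ q.1 < p.1 → toFill T a p < toFill T a q := by
    intro p q hp hq hlt hr
    rw [toFill_cell hp, toFill_cell hq]
    have h1 := entry_mem T hp
    have h2 := entry_mem T hq
    have hr' : ¬ (cellOf T (T.entry q)).1 < (cellOf T (T.entry p)).1 := by
      rwa [cellOf_entry T hp, cellOf_entry T hq]
    obtain ⟨j, hj1, hj2, hj3⟩ := exists_nonasc T h1.1 hlt h2.2 hr'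
    have hjIcc := Finset.mem_Icc.mp (coAsc_subset T hj3)
    have s1 : a (T.entry p) ≤ a j := mono_chain ha.2.2.1 _ _ h1.1 hj1 (by omega)
    have s2 : a j < a (j + 1) := ha.2.2.2 j hj3
    have s3 : a (j + 1) ≤ a (T.entry q) := mono_chain ha.2.2.1 _ _ (by omega) (by omega) h2.2
    omega
  refine ⟨?_, ?_, ?_, ?_⟩
  · intro p hp; rw [toFill, if_neg hp]
  · intro p hp
    rw [toFill_cell hp]
    have h1 := entry_mem T hp
    exact ha.2.1 _ h1.1 h1.2
  · intro r c hq
    have hp : (r, c) ∈ ydCells (List.replicate k n) := by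
      rw [mem_cells] at hq ⊢; exact ⟨hq.1, by omega⟩
    exact hstrict _ _ hp hq (T.row_incr r c hq) (by omega)
  · intro r c hq
    have hp : (r, c) ∈ ydCells (List.replicate k n) := by
      rw [mem_cells] at hq ⊢; exact ⟨by omega, hq.2⟩
    exact hstrict _ _ hp hq (T.col_incr r c hq) (by omega)

lemma keyS_step {m : ℕ} (T : SYT (List.replicate k n)) {a : ℕ → ℕ}
    (ha : IsChain (k * n) m (coAsc T) a)
    {i : ℕ} (h1 : 1 ≤ i) (h2 : i + 1 ≤ k * n) :
    keyS k n (toFill T a) (cellOf T i) < keyS k n (toFill T a) (cellOf T (i + 1)) := by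
  have hi : i ∈ Set.Icc 1 (k * n) := ⟨h1, by omega⟩
  have hi1 : (i + 1) ∈ Set.Icc 1 (k * n) := ⟨by omega, h2⟩
  have hmem := cellOf_mem T hi
  have hmem1 := cellOf_mem T hi1
  rw [keyS_lt_iff hmem hmem1, toFill_cellOf hi, toFill_cellOf hi1]
  have hle : a i ≤ a (i + 1) := ha.2.2.1 i h1 h2
  rcases lt_or_eq_of_le hle with h | h
  · exact Or.inl h
  · right
    refine ⟨h, ?_⟩
    have hIcc : i ∈ Finset.Icc 1 (k * n - 1) := Finset.mem_Icc.mpr ⟨h1, by omega⟩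
    have hasc : i ∈ ascSet (List.replicate k n) T := by
      by_contra hna
      have := ha.2.2.2 i (mem_coAsc.mpr ⟨hIcc, hna⟩)
      omega
    exact Or.inl ((mem_ascSet_iff T).mp hasc).2

lemma keyS_chain {m : ℕ} (T : SYT (List.replicate k n)) {a : ℕ → ℕ}
    (ha : IsChain (k * n) m (coAsc T) a)
    {i j : ℕ} (h1 : 1 ≤ i) (hij : i < j) (hj : j ≤ k * n) :
    keyS k n (toFill T a) (cellOf T i) < keyS k n (toFill T a) (cellOf T j) := by
  have : i + 1 ≤ j := hij
  induction j, this using Nat.le_induction with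
  | base => exact keyS_step T ha h1 hj
  | succ j hij ih =>
      exact lt_trans (ih (by omega) (by omega))
        (keyS_step T ha (by omega) (by omega))

lemma entry_le_iff_keyS {m : ℕ} (T : SYT (List.replicate k n)) {a : ℕ → ℕ}
    (ha : IsChain (k * n) m (coAsc T) a)
    {p q : ℕ × ℕ} (hp : p ∈ ydCells (List.replicate k n))
    (hq : q ∈ ydCells (List.replicate k n)) :
    T.entry p ≤ T.entry q ↔ keyS k n (toFill T a) p ≤ keyS k n (toFill T a) q := by
  by_cases hpq : p = q
  · subst hpq; simp
  · have hlt : ∀ p' q', p' ∈ ydCells (List.replicate k n) →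
        q' ∈ ydCells (List.replicate k n) → T.entry p' < T.entry q' →
        keyS k n (toFill T a) p' < keyS k n (toFill T a) q' := by
      intro p' q' hp' hq' hlt
      have h1 := entry_mem T hp'
      have h2 := entry_mem T hq'
      have := keyS_chain T ha h1.1 hlt h2.2
      rwa [cellOf_entry T hp', cellOf_entry T hq'] at this
    constructor
    · intro h
      rcases lt_or_eq_of_le h with h' | h'
      · exact le_of_lt (hlt p q hp hq h')
      · exact le_of_eq (congrArg _ (T.bijOn.injOn hp hq h'))
    · intro h
      by_contra hc
      push_neg at hc
      have := hlt q p hq hp hc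
      omega

/-- Standardization of a strict filling. -/
noncomputable def stdS {m : ℕ} (F : ℕ × ℕ → ℕ) (hF : IsStrict k n m F) :
    SYT (List.replicate k n) where
  entry := stdEntry (keyS k n) F
  zero_outside := by
    intro p hp
    rw [stdEntry, if_neg hp]
  bijOn := by
    rw [sum_replicate']
    exact stdEntry_bijOn _ F (keyS_injOn F)
  row_incr := by
    intro r c hq
    have hp : (r, c) ∈ ydCells (List.replicate k n) := by
      rw [mem_cells] at hq ⊢; exact ⟨hq.1, by omega⟩
    rw [stdEntry_lt_iff _ F (keyS_injOn F) hp hq, keyS_lt_iff hp hq]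
    exact Or.inl (hF.2.2.1 r c hq)
  col_incr := by
    intro r c hq
    have hp : (r, c) ∈ ydCells (List.replicate k n) := by
      rw [mem_cells] at hq ⊢; exact ⟨by omega, hq.2⟩
    rw [stdEntry_lt_iff _ F (keyS_injOn F) hp hq, keyS_lt_iff hp hq]
    exact Or.inl (hF.2.2.2 r c hq)

/-- The chain extracted from a strict filling. -/
noncomputable def stdSa {m : ℕ} (F : ℕ × ℕ → ℕ) (hF : IsStrict k n m F) : ℕ → ℕ :=
  fun i => if 1 ≤ i ∧ i ≤ k * n then F (cellOf (stdS F hF) i) else 0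

lemma stdS_key_lt {m : ℕ} (F : ℕ × ℕ → ℕ) (hF : IsStrict k n m F)
    {i : ℕ} (h1 : 1 ≤ i) (h2 : i + 1 ≤ k * n) :
    keyS k n F (cellOf (stdS F hF) i) < keyS k n F (cellOf (stdS F hF) (i + 1)) := by
  set T := stdS F hF with hT
  have hi : i ∈ Set.Icc 1 (k * n) := ⟨h1, by omega⟩
  have hi1 : (i + 1) ∈ Set.Icc 1 (k * n) := ⟨by omega, h2⟩
  have hmem := cellOf_mem T hi
  have hmem1 := cellOf_mem T hi1
  have hent : T.entry (cellOf T i) < T.entry (cellOf T (i + 1)) := by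
    rw [entry_cellOf T hi, entry_cellOf T hi1]; omega
  have : stdEntry (keyS k n) F (cellOf T i) < stdEntry (keyS k n) F (cellOf T (i + 1)) := hent
  exact (stdEntry_lt_iff _ F (keyS_injOn F) hmem hmem1).mp this

lemma stdSa_isChain {m : ℕ} (F : ℕ × ℕ → ℕ) (hF : IsStrict k n m F) :
    IsChain (k * n) m (coAsc (stdS F hF)) (stdSa F hF) := by
  set T := stdS F hF with hT
  refine ⟨?_, ?_, ?_, ?_⟩
  · intro i hi; rw [stdSa, if_neg hi]
  · intro i hi1 hi2
    rw [stdSa, if_pos ⟨hi1, hi2⟩]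
    exact hF.2.1 _ (cellOf_mem T ⟨hi1, hi2⟩)
  · intro i hi1 hi2
    simp only [stdSa]
    rw [if_pos (show 1 ≤ i ∧ i ≤ k * n by omega), if_pos (show 1 ≤ i + 1 ∧ i + 1 ≤ k * n by omega)]
    have hkey := stdS_key_lt F hF hi1 hi2
    rw [keyS_lt_iff (cellOf_mem T ⟨hi1, by omega⟩) (cellOf_mem T ⟨by omega, hi2⟩)] at hkey
    rcases hkey with h | ⟨h, _⟩
    · exact le_of_lt h
    · exact le_of_eq h
  · intro i hico
    have hIcc := Finset.mem_Icc.mp (coAsc_subset T hico)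
    have hnasc := (mem_coAsc.mp hico).2
    have hkn : 1 ≤ k * n := by omega
    have h2 : i + 1 ≤ k * n := by omega
    simp only [stdSa]
    rw [if_pos (show 1 ≤ i ∧ i ≤ k * n by omega), if_pos (show 1 ≤ i + 1 ∧ i + 1 ≤ k * n by omega)]
    have hmi : i ∈ Set.Icc 1 (k * n) := ⟨hIcc.1, by omega⟩
    have hmi1 : (i + 1) ∈ Set.Icc 1 (k * n) := ⟨by omega, h2⟩
    have hkey := stdS_key_lt F hF hIcc.1 h2
    rw [keyS_lt_iff (cellOf_mem T hmi) (cellOf_mem T hmi1)] at hkey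
    rcases hkey with h | ⟨h, h' | ⟨h', h''⟩⟩
    · exact h
    · exfalso
      exact hnasc ((mem_ascSet_iff T).mpr ⟨Finset.mem_Icc.mpr hIcc, h'⟩)
    · exfalso
      have := strict_le hF (cellOf_mem T hmi1) (le_of_eq h') (le_of_lt h'')
      omega

/-- The strict standardization equivalence. -/
noncomputable def strictEquiv (m : ℕ) :
    (Σ T : SYT (List.replicate k n),
      {a : ℕ → ℕ // IsChain (k * n) m (coAsc T) a})
      ≃ {F : ℕ × ℕ → ℕ // IsStrict k n m F} := by
  apply Equiv.ofBijective
    (fun x => (⟨toFill x.1 x.2.1, toFill_isStrict x.1 x.2.2⟩ :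
      {F : ℕ × ℕ → ℕ // IsStrict k n m F}))
  constructor
  · rintro ⟨T, a, ha⟩ ⟨T', a', ha'⟩ h
    have hFF : toFill T a = toFill T' a' := congrArg Subtype.val h
    have hb1 : Set.BijOn T.entry (ydCells (List.replicate k n)) (Set.Icc 1 (k * n)) := by
      have := T.bijOn; rwa [sum_replicate'] at this
    have hb2 : Set.BijOn T'.entry (ydCells (List.replicate k n)) (Set.Icc 1 (k * n)) := by
      have := T'.bijOn; rwa [sum_replicate'] at this
    have hord : ∀ p ∈ (ydCells (List.replicate k n) : Finset (ℕ × ℕ)),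
        ∀ q ∈ (ydCells (List.replicate k n) : Finset (ℕ × ℕ)),
        (T.entry p ≤ T.entry q ↔ T'.entry p ≤ T'.entry q) := by
      intro p hp q hq
      rw [entry_le_iff_keyS T ha hp hq, entry_le_iff_keyS T' ha' hp hq, hFF]
    have hent := entry_eq_of_same_order (ydCells (List.replicate k n)) hb1 hb2 hord
    have hTT : T = T' := by
      apply SYT.ext'
      funext p
      by_cases hp : p ∈ ydCells (List.replicate k n)
      · exact hent p hp
      · rw [T.zero_outside p hp, T'.zero_outside p hp]
    subst hTT
    have haa : a = a' := by
      funext i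
      by_cases hi : 1 ≤ i ∧ i ≤ k * n
      · have h1 : a i = toFill T a (cellOf T i) := (toFill_cellOf ⟨hi.1, hi.2⟩).symm
        have h2 : a' i = toFill T a' (cellOf T i) := (toFill_cellOf ⟨hi.1, hi.2⟩).symm
        rw [h1, h2, hFF]
      · rw [ha.1 i hi, ha'.1 i hi]
    subst haa
    rfl
  · rintro ⟨F, hF⟩
    refine ⟨⟨stdS F hF, stdSa F hF, stdSa_isChain F hF⟩, ?_⟩
    apply Subtype.ext
    funext p
    show toFill (stdS F hF) (stdSa F hF) p = F p
    by_cases hp : p ∈ ydCells (List.replicate k n)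
    · rw [toFill_cell hp]
      have hi := entry_mem (stdS F hF) hp
      simp only [stdSa]
      rw [if_pos (⟨hi.1, hi.2⟩ : 1 ≤ (stdS F hF).entry p ∧ (stdS F hF).entry p ≤ k * n),
        cellOf_entry _ hp]
    · simp only [toFill, if_neg hp]
      exact (hF.1 p hp).symm

end NarayanaAux
namespace NarayanaAux

open Finset

attribute [local instance] Classical.propDecidable

variable {k n : ℕ}

/-- Expansion of a `w`-sum over fibers. -/
lemma sum_w_expand {α : Type*} [Fintype α] {N : ℕ} (hN : 1 ≤ N) (f : α → ℕ) (h : ℕ) :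
    ∑ T : α, w N (h + 1 - f T) =
      ∑ j ∈ Finset.range (h + 1),
        (Finset.univ.filter (fun T => f T = j)).card * w N (h + 1 - j) := by
  have hper : ∀ T : α, w N (h + 1 - f T) =
      ∑ j ∈ Finset.range (h + 1), if j = f T then w N (h + 1 - j) else 0 := by
    intro T
    by_cases hf : f T ≤ h
    · rw [Finset.sum_ite_eq' (Finset.range (h + 1)) (f T) (fun j => w N (h + 1 - j)),
        if_pos (Finset.mem_range.mpr (by omega))]
    · have h0 : h + 1 - f T = 0 := by omega
      rw [h0, w_zero hN, Finset.sum_eq_zero]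
      intro j hj
      rw [Finset.mem_range] at hj
      rw [if_neg (by omega)]
  calc ∑ T : α, w N (h + 1 - f T)
      = ∑ T : α, ∑ j ∈ Finset.range (h + 1), if j = f T then w N (h + 1 - j) else 0 :=
        Finset.sum_congr rfl (fun T _ => hper T)
    _ = ∑ j ∈ Finset.range (h + 1), ∑ T : α, if j = f T then w N (h + 1 - j) else 0 :=
        Finset.sum_comm
    _ = ∑ j ∈ Finset.range (h + 1),
          (Finset.univ.filter (fun T => f T = j)).card * w N (h + 1 - j) := by
        apply Finset.sum_congr rfl
        intro j _
        rw [← Finset.sum_filter, Finset.sum_const, smul_eq_mul]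
        congr 2
        apply Finset.filter_congr
        intro T _
        exact ⟨fun h' => h'.symm, fun h' => h'.symm⟩

/-- From equality of all `w`-sums, deduce equality of the fiber counts. -/
lemma count_eq_of_sum_w {α : Type*} [Fintype α] {N : ℕ} (hN : 1 ≤ N) (f g : α → ℕ)
    (H : ∀ m, ∑ T : α, w N (m - f T) = ∑ T : α, w N (m - g T)) :
    ∀ h, (Finset.univ.filter (fun T => f T = h)).card =
      (Finset.univ.filter (fun T => g T = h)).card := by
  intro h
  induction h using Nat.strong_induction_on with
  | _ h ih =>
    have hm := H (h + 1)
    rw [sum_w_expand hN f h, sum_w_expand hN g h] at hm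
    rw [Finset.sum_range_succ, Finset.sum_range_succ] at hm
    have hpre : ∑ j ∈ Finset.range h,
        (Finset.univ.filter (fun T => f T = j)).card * w N (h + 1 - j) =
        ∑ j ∈ Finset.range h,
        (Finset.univ.filter (fun T => g T = j)).card * w N (h + 1 - j) := by
      apply Finset.sum_congr rfl
      intro j hj
      rw [ih j (Finset.mem_range.mp hj)]
    rw [hpre] at hm
    have hone : h + 1 - h = 1 := by omega
    rw [hone, w_one hN] at hm
    omega

end NarayanaAux
namespace NarayanaAux

open Finset

attribute [local instance] Classical.propDecidable

variable {k n : ℕ}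

lemma nat_card_sigma {α : Type*} [Fintype α] (β : α → Type*) [∀ a, Finite (β a)] :
    Nat.card (Σ a, β a) = ∑ a : α, Nat.card (β a) := by
  letI : ∀ a, Fintype (β a) := fun a => Fintype.ofFinite _
  rw [Nat.card_eq_fintype_card, Fintype.card_sigma]
  exact Finset.sum_congr rfl (fun a _ => (Nat.card_eq_fintype_card).symm)

lemma hkey_arith (hk : 1 ≤ k) (hn : 1 ≤ n) :
    (k - 1) * (n - 1) + (k - 1) + (n - 1) = k * n - 1 := by
  obtain ⟨k', rfl⟩ := Nat.exists_eq_add_of_le hk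
  obtain ⟨n', rfl⟩ := Nat.exists_eq_add_of_le hn
  ring_nf
  simp [Nat.add_mul, Nat.mul_add]
  omega

/-- The central identity. -/
lemma central (hk : 1 ≤ k) (hn : 1 ≤ n) [Fintype (SYT (List.replicate k n))] (m : ℕ) :
    ∑ T : SYT (List.replicate k n), w (k * n) (m - ascNum (List.replicate k n) T) =
      ∑ T : SYT (List.replicate k n),
        w (k * n) (m - ((k - 1) * (n - 1) - ascNum (List.replicate k n) T)) := by
  have hN : 1 ≤ k * n := Nat.mul_pos hk hn
  have hkey := hkey_arith hk hn
  calc ∑ T : SYT (List.replicate k n), w (k * n) (m - ascNum (List.replicate k n) T)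
      = ∑ T : SYT (List.replicate k n),
          Nat.card {a : ℕ → ℕ // IsChain (k * n) m (ascSet (List.replicate k n) T) a} := by
        apply Finset.sum_congr rfl
        intro T _
        rw [card_chains (k * n) m _ (ascSet_subset T) hN, ascNum]
    _ = Nat.card (Σ T : SYT (List.replicate k n),
          {a : ℕ → ℕ // IsChain (k * n) m (ascSet (List.replicate k n) T) a}) :=
        (nat_card_sigma _).symm
    _ = Nat.card {F : ℕ × ℕ → ℕ // IsWeak k n m F} := Nat.card_congr (weakEquiv m)
    _ = Nat.card {F : ℕ × ℕ → ℕ // IsStrict k n (m + (k - 1) + (n - 1)) F} :=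
        (Nat.card_congr (shiftEquiv m hk hn)).symm
    _ = Nat.card (Σ T : SYT (List.replicate k n),
          {a : ℕ → ℕ // IsChain (k * n) (m + (k - 1) + (n - 1)) (coAsc T) a}) :=
        (Nat.card_congr (strictEquiv (m + (k - 1) + (n - 1)))).symm
    _ = ∑ T : SYT (List.replicate k n),
          Nat.card {a : ℕ → ℕ // IsChain (k * n) (m + (k - 1) + (n - 1)) (coAsc T) a} :=
        nat_card_sigma _
    _ = ∑ T : SYT (List.replicate k n),
          w (k * n) (m - ((k - 1) * (n - 1) - ascNum (List.replicate k n) T)) := by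
        apply Finset.sum_congr rfl
        intro T _
        rw [card_chains (k * n) _ _ (coAsc_subset T) hN, card_coAsc T hk hn]
        congr 1
        have hle := ascNum_le T
        omega

end NarayanaAux

theorem narayana_symmetry' (k n h : ℕ) (hk : 1 ≤ k) (hn : 1 ≤ n)
    (hh : h ≤ (k - 1) * (n - 1)) :
    Nat.card {T : SYT (List.replicate k n) // ascNum (List.replicate k n) T = h} =
      Nat.card {T : SYT (List.replicate k n) //
        ascNum (List.replicate k n) T = (k - 1) * (n - 1) - h} := by
  classical
  open NarayanaAux in
  letI : Fintype (SYT (List.replicate k n)) := Fintype.ofFinite _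
  have hN : 1 ≤ k * n := Nat.mul_pos hk hn
  have H := NarayanaAux.count_eq_of_sum_w hN
    (fun T : SYT (List.replicate k n) => ascNum (List.replicate k n) T)
    (fun T : SYT (List.replicate k n) =>
      (k - 1) * (n - 1) - ascNum (List.replicate k n) T)
    (fun m => NarayanaAux.central hk hn m) h
  have e1 : Nat.card {T : SYT (List.replicate k n) // ascNum (List.replicate k n) T = h} =
      (Finset.univ.filter
        (fun T : SYT (List.replicate k n) => ascNum (List.replicate k n) T = h)).card := by
    rw [Nat.card_eq_fintype_card, Fintype.card_subtype]
  have e2 : Nat.card {T : SYT (List.replicate k n) //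
      ascNum (List.replicate k n) T = (k - 1) * (n - 1) - h} =
      (Finset.univ.filter (fun T : SYT (List.replicate k n) =>
        (k - 1) * (n - 1) - ascNum (List.replicate k n) T = h)).card := by
    rw [Nat.card_eq_fintype_card, Fintype.card_subtype]
    congr 1
    apply Finset.filter_congr
    intro T _
    have := NarayanaAux.ascNum_le T
    constructor <;> intro h' <;> omega
  rw [e1, e2, H]

/-- Theorem: symmetry of the generalized Narayana numbers,
`N(k,n,h) = N(k,n,(k-1)(n-1)-h)`. -/
theorem narayana_symmetry (k n h : ℕ) (hk : 1 ≤ k) (hn : 1 ≤ n)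
    (hh : h ≤ (k - 1) * (n - 1)) :
    Nat.card {T : SYT (List.replicate k n) // ascNum (List.replicate k n) T = h} =
      Nat.card {T : SYT (List.replicate k n) //
        ascNum (List.replicate k n) T = (k - 1) * (n - 1) - h} := by
  exact narayana_symmetry' k n h hk hn hh
end

section
/- For all integers k,n ≥ 1, there exists an involution Φ : SYT(n^k) → SYT(n^k) (i.e. Φ∘Φ is the identity) such that for every T ∈ SYT(n^k), des(T) + des(Φ(T)) = (k−1)(n+1). -/
open Finset

/-! ### Auxiliary development -/

section Aux

variable {a b : ℕ}

lemma mem_ydCells_replicate {p : ℕ × ℕ} :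
    p ∈ ydCells (List.replicate a b) ↔ p.1 < a ∧ p.2 < b := by
  rcases p with ⟨r, c⟩
  simp only [ydCells, Finset.mem_biUnion, Finset.mem_range, Finset.mem_image,
    List.length_replicate]
  constructor
  · rintro ⟨r', hr', c', hc', h⟩
    rw [Prod.mk.injEq] at h
    obtain ⟨rfl, rfl⟩ := h
    refine ⟨hr', ?_⟩
    have hg : (List.replicate a b).getD r' 0 = b := by
      rw [List.getD_eq_getElem?_getD]
      simp [List.getElem?_replicate, hr']
    rwa [hg] at hc'
  · rintro ⟨hr, hc⟩
    refine ⟨r, hr, c, ?_, rfl⟩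
    rw [List.getD_eq_getElem?_getD]
    simp [List.getElem?_replicate, hr, hc]

lemma sum_replicate' : (List.replicate a b).sum = a * b := by
  rw [List.sum_replicate, smul_eq_mul]

lemma card_ydCells_replicate : (ydCells (List.replicate a b)).card = a * b := by
  classical
  have h : ydCells (List.replicate a b) =
      (Finset.range a ×ˢ Finset.range b) := by
    ext p; simp [mem_ydCells_replicate, Finset.mem_product]
  rw [h, Finset.card_product, Finset.card_range, Finset.card_range]

end Aux

namespace SYT

variable {lam : List ℕ}

theorem ext' {T U : SYT lam} (h : T.entry = U.entry) : T = U := by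
  cases T; cases U; simpa using h

instance : Finite (SYT lam) := by
  classical
  apply Finite.of_injective
    (fun (T : SYT lam) (p : {p // p ∈ ydCells lam}) =>
      (⟨T.entry p, Nat.lt_succ_of_le (T.bijOn.mapsTo p.2).2⟩ : Fin (lam.sum + 1)))
  intro T U h
  apply ext'
  funext p
  by_cases hp : p ∈ ydCells lam
  · have := congrFun h ⟨p, hp⟩
    simpa using this
  · rw [T.zero_outside p hp, U.zero_outside p hp]

variable {a b : ℕ} (T : SYT (List.replicate a b))

lemma mem_cells_of_le {p q : ℕ × ℕ} (hq : q ∈ ydCells (List.replicate a b))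
    (h1 : p.1 ≤ q.1) (h2 : p.2 ≤ q.2) : p ∈ ydCells (List.replicate a b) := by
  rw [mem_ydCells_replicate] at hq ⊢; omega

lemma entry_row_strictMono {r : ℕ} : ∀ {c c' : ℕ}, c < c' →
    (r, c') ∈ ydCells (List.replicate a b) → T.entry (r, c) < T.entry (r, c') := by
  intro c c'
  induction c' with
  | zero => intro h _; omega
  | succ d ih =>
    intro h hc
    rcases Nat.lt_or_ge c d with h' | h'
    · have hd : (r, d) ∈ ydCells (List.replicate a b) :=
        mem_cells_of_le hc (le_refl _) (Nat.le_succ d)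
      exact lt_trans (ih h' hd) (T.row_incr r d hc)
    · have hcd : c = d := by omega
      rw [hcd]
      exact T.row_incr r d hc

lemma entry_col_strictMono {c : ℕ} : ∀ {r r' : ℕ}, r < r' →
    (r', c) ∈ ydCells (List.replicate a b) → T.entry (r, c) < T.entry (r', c) := by
  intro r r'
  induction r' with
  | zero => intro h _; omega
  | succ d ih =>
    intro h hc
    rcases Nat.lt_or_ge r d with h' | h'
    · have hd : (d, c) ∈ ydCells (List.replicate a b) :=
        mem_cells_of_le hc (Nat.le_succ d) (le_refl _)
      exact lt_trans (ih h' hd) (T.col_incr d c hc)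
    · have hrd : r = d := by omega
      rw [hrd]
      exact T.col_incr d c hc

lemma entry_lt_of_dominates {p q : ℕ × ℕ} (hq : q ∈ ydCells (List.replicate a b))
    (h1 : p.1 ≤ q.1) (h2 : p.2 ≤ q.2) (hne : p ≠ q) : T.entry p < T.entry q := by
  rcases Nat.lt_or_ge p.1 q.1 with hr | hr
  · have hmid : (p.1, q.2) ∈ ydCells (List.replicate a b) :=
      mem_cells_of_le hq (by omega) (le_refl _)
    have h1' : T.entry (p.1, p.2) ≤ T.entry (p.1, q.2) := by
      rcases Nat.lt_or_ge p.2 q.2 with hc | hc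
      · exact le_of_lt (T.entry_row_strictMono hc hmid)
      · have : p.2 = q.2 := by omega
        rw [this]
    have h2' : T.entry (p.1, q.2) < T.entry (q.1, q.2) := by
      have := T.entry_col_strictMono hr (show ((q.1 : ℕ), q.2) ∈ _ from by
        simpa using hq)
      exact this
    calc T.entry p = T.entry (p.1, p.2) := by rw [Prod.mk.eta]
    _ ≤ T.entry (p.1, q.2) := h1'
    _ < T.entry (q.1, q.2) := h2'
    _ = T.entry q := by rw [Prod.mk.eta]
  · have hr' : p.1 = q.1 := by omega
    have hc : p.2 < q.2 := by
      rcases Nat.lt_or_ge p.2 q.2 with hc | hc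
      · exact hc
      · exfalso; apply hne; ext <;> omega
    have := T.entry_row_strictMono (r := p.1) hc (by rw [hr']; simpa using hq)
    calc T.entry p = T.entry (p.1, p.2) := by rw [Prod.mk.eta]
    _ < T.entry (p.1, q.2) := this
    _ = T.entry q := by rw [hr', Prod.mk.eta]

end SYT

section CellOf

variable {lam : List ℕ}

/-- The cell of `T` containing the value `i` (junk value if `i` is out of range). -/
noncomputable def SYT.cellOf (T : SYT lam) (i : ℕ) : ℕ × ℕ :=
  if h : ∃ p, p ∈ ydCells lam ∧ T.entry p = i then h.choose else (0, 0)

lemma SYT.cellOf_spec (T : SYT lam) {i : ℕ} (hi1 : 1 ≤ i) (hi2 : i ≤ lam.sum) :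
    T.cellOf i ∈ ydCells lam ∧ T.entry (T.cellOf i) = i := by
  obtain ⟨p, hp, hpe⟩ := T.bijOn.surjOn (Set.mem_Icc.mpr ⟨hi1, hi2⟩)
  have h : ∃ p, p ∈ ydCells lam ∧ T.entry p = i := ⟨p, by simpa using hp, hpe⟩
  rw [SYT.cellOf, dif_pos h]
  exact ⟨h.choose_spec.1, h.choose_spec.2⟩

lemma SYT.cellOf_mem (T : SYT lam) {i : ℕ} (hi1 : 1 ≤ i) (hi2 : i ≤ lam.sum) :
    T.cellOf i ∈ ydCells lam := (T.cellOf_spec hi1 hi2).1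

lemma SYT.entry_cellOf (T : SYT lam) {i : ℕ} (hi1 : 1 ≤ i) (hi2 : i ≤ lam.sum) :
    T.entry (T.cellOf i) = i := (T.cellOf_spec hi1 hi2).2

lemma SYT.cellOf_entry (T : SYT lam) {p : ℕ × ℕ} (hp : p ∈ ydCells lam) :
    T.cellOf (T.entry p) = p := by
  have h1 : 1 ≤ T.entry p := (T.bijOn.mapsTo hp).1
  have h2 : T.entry p ≤ lam.sum := (T.bijOn.mapsTo hp).2
  exact T.bijOn.injOn (T.cellOf_mem h1 h2) hp (T.entry_cellOf h1 h2)

lemma SYT.eq_cellOf (T : SYT lam) {p : ℕ × ℕ} {i : ℕ} (hp : p ∈ ydCells lam)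
    (h : T.entry p = i) : p = T.cellOf i := by
  rw [← h, T.cellOf_entry hp]

lemma mem_desSet_iff {T : SYT lam} {i : ℕ} :
    i ∈ desSet lam T ↔ (1 ≤ i ∧ i ≤ lam.sum - 1) ∧
      (T.cellOf i).1 < (T.cellOf (i + 1)).1 := by
  rw [desSet, Finset.mem_filter, Finset.mem_Icc]
  constructor
  · rintro ⟨⟨h1, h2⟩, p, hp, q, hq, e1, e2, hlt⟩
    have hs : 1 ≤ lam.sum - 1 := le_trans h1 h2
    refine ⟨⟨h1, h2⟩, ?_⟩
    rw [← T.eq_cellOf hp e1, ← T.eq_cellOf hq e2]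
    exact hlt
  · rintro ⟨⟨h1, h2⟩, hlt⟩
    have hs : 2 ≤ lam.sum := by omega
    refine ⟨⟨h1, h2⟩, T.cellOf i, T.cellOf_mem h1 (by omega), T.cellOf (i+1),
      T.cellOf_mem (by omega) (by omega), T.entry_cellOf h1 (by omega),
      T.entry_cellOf (by omega) (by omega), hlt⟩

lemma desSet_subset {T : SYT lam} : desSet lam T ⊆ Finset.Icc 1 (lam.sum - 1) :=
  Finset.filter_subset _ _

end CellOf

section Rank

variable {α : Type*} [DecidableEq α]

/-- The rank of `p` in `s` according to an injective key. -/
def rankIn (s : Finset α) (key : α → ℕ) (p : α) : ℕ :=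
  1 + (s.filter fun q => key q < key p).card

lemma rankIn_lt_rankIn {s : Finset α} {key : α → ℕ} {p q : α}
    (hp : p ∈ s) (hkey : key p < key q) : rankIn s key p < rankIn s key q := by
  have hsub : (s.filter fun t => key t < key p) ⊆ (s.filter fun t => key t < key q) := by
    intro t ht
    rw [Finset.mem_filter] at ht ⊢
    exact ⟨ht.1, lt_trans ht.2 hkey⟩
  have hss : (s.filter fun t => key t < key p) ⊂ (s.filter fun t => key t < key q) :=
    (Finset.ssubset_iff_of_subset hsub).mpr ⟨p, Finset.mem_filter.mpr ⟨hp, hkey⟩, fun hmem =>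
        absurd (Finset.mem_filter.mp hmem).2 (lt_irrefl _)⟩
  have := Finset.card_lt_card hss
  simp only [rankIn]; omega

lemma rankIn_lt_iff {s : Finset α} {key : α → ℕ} (hinj : Set.InjOn key s) {p q : α}
    (hp : p ∈ s) (hq : q ∈ s) : rankIn s key p < rankIn s key q ↔ key p < key q := by
  constructor
  · intro h
    rcases lt_trichotomy (key p) (key q) with h' | h' | h'
    · exact h'
    · exfalso; have : p = q := hinj hp hq h'; rw [this] at h; omega
    · exfalso; have := rankIn_lt_rankIn hq h'; omega
  · exact rankIn_lt_rankIn hp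

lemma rankIn_injOn {s : Finset α} {key : α → ℕ} (hinj : Set.InjOn key s) :
    Set.InjOn (rankIn s key) s := by
  intro p hp q hq h
  rcases lt_trichotomy (key p) (key q) with h' | h' | h'
  · exfalso; have := rankIn_lt_rankIn hp h'; omega
  · exact hinj hp hq h'
  · exfalso; have := rankIn_lt_rankIn hq h'; omega

lemma rankIn_mem {s : Finset α} {key : α → ℕ} {p : α} (hp : p ∈ s) :
    rankIn s key p ∈ Finset.Icc 1 s.card := by
  have hsub : (s.filter fun q => key q < key p) ⊆ s.erase p := by
    intro t ht
    rw [Finset.mem_erase]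
    refine ⟨?_, (Finset.mem_filter.mp ht).1⟩
    rintro rfl
    exact absurd (Finset.mem_filter.mp ht).2 (lt_irrefl _)
  have h1 := Finset.card_le_card hsub
  have h2 : (s.erase p).card = s.card - 1 := Finset.card_erase_of_mem hp
  have h3 : 1 ≤ s.card := Finset.card_pos.mpr ⟨p, hp⟩
  rw [Finset.mem_Icc, rankIn]
  omega

lemma rankIn_image {s : Finset α} {key : α → ℕ} (hinj : Set.InjOn key s) :
    s.image (rankIn s key) = Finset.Icc 1 s.card := by
  apply Finset.eq_of_subset_of_card_le
  · intro j hj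
    obtain ⟨p, hp, rfl⟩ := Finset.mem_image.mp hj
    exact rankIn_mem hp
  · rw [Nat.card_Icc, Finset.card_image_of_injOn (rankIn_injOn hinj)]
    omega

lemma rankIn_surjOn {s : Finset α} {key : α → ℕ} (hinj : Set.InjOn key s) {j : ℕ}
    (h1 : 1 ≤ j) (h2 : j ≤ s.card) : ∃ p ∈ s, rankIn s key p = j := by
  have : j ∈ s.image (rankIn s key) := by
    rw [rankIn_image hinj, Finset.mem_Icc]; exact ⟨h1, h2⟩
  obtain ⟨p, hp, hpe⟩ := Finset.mem_image.mp this
  exact ⟨p, hp, hpe⟩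

end Rank

section RectFacts

variable {a b : ℕ} (T : SYT (List.replicate a b))

lemma SYT.card_lt_entry {e : ℕ} (h1 : 1 ≤ e) (h2 : e ≤ a * b) :
    ((ydCells (List.replicate a b)).filter fun q => T.entry q < e).card = e - 1 := by
  classical
  have hsum : (List.replicate a b).sum = a * b := sum_replicate'
  have hcard : ((ydCells (List.replicate a b)).filter fun q => T.entry q < e).card
      = (Finset.Icc 1 (e-1)).card := by
    apply Finset.card_bij (fun q _ => T.entry q)
    · intro q hq
      rw [Finset.mem_filter] at hq
      have h3 := (T.bijOn.mapsTo (by exact_mod_cast hq.1)).1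
      rw [Finset.mem_Icc]
      omega
    · intro q hq q' hq' he
      rw [Finset.mem_filter] at hq hq'
      exact T.bijOn.injOn (by exact_mod_cast hq.1) (by exact_mod_cast hq'.1) he
    · intro j hj
      rw [Finset.mem_Icc] at hj
      refine ⟨T.cellOf j, Finset.mem_filter.mpr ⟨T.cellOf_mem hj.1 (by omega), ?_⟩, ?_⟩
      · rw [T.entry_cellOf hj.1 (by omega)]; omega
      · rw [T.entry_cellOf hj.1 (by omega)]
  rw [hcard, Nat.card_Icc]
  omega

lemma SYT.col_lt_of_same_row {p q : ℕ × ℕ} (hp : p ∈ ydCells (List.replicate a b))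
    (hq : q ∈ ydCells (List.replicate a b)) (hr : p.1 = q.1)
    (he : T.entry p < T.entry q) : p.2 < q.2 := by
  by_contra hcon
  push_neg at hcon
  rcases Nat.eq_or_lt_of_le hcon with h | h
  · have hqp : p = q := by
      rw [Prod.ext_iff]; exact ⟨hr, h.symm⟩
    rw [hqp] at he; omega
  · have := T.entry_lt_of_dominates (p := q) hp (le_of_eq hr.symm) (le_of_lt h)
      (by intro hh; rw [hh] at h; omega)
    omega

lemma SYT.consec_or {i : ℕ} (h1 : 1 ≤ i) (h2 : i + 1 ≤ a * b) :
    (T.cellOf i).1 < (T.cellOf (i+1)).1 ∨ (T.cellOf i).2 < (T.cellOf (i+1)).2 := by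
  have hsum : (List.replicate a b).sum = a * b := sum_replicate'
  set p := T.cellOf i with hp
  set q := T.cellOf (i+1) with hq
  have hpm : p ∈ ydCells (List.replicate a b) := T.cellOf_mem h1 (by omega)
  have hqm : q ∈ ydCells (List.replicate a b) := T.cellOf_mem (by omega) (by omega)
  have hep : T.entry p = i := T.entry_cellOf h1 (by omega)
  have heq : T.entry q = i + 1 := T.entry_cellOf (by omega) (by omega)
  by_contra hcon
  push_neg at hcon
  have hne : q ≠ p := by
    intro hh; rw [hh, hep] at heq; omega
  have := T.entry_lt_of_dominates (p := q) (q := p) hpm hcon.1 hcon.2 hne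
  omega

lemma SYT.consec_not_both {i : ℕ} (h1 : 1 ≤ i) (h2 : i + 1 ≤ a * b) :
    ¬((T.cellOf i).1 < (T.cellOf (i+1)).1 ∧ (T.cellOf i).2 < (T.cellOf (i+1)).2) := by
  have hsum : (List.replicate a b).sum = a * b := sum_replicate'
  rintro ⟨hr, hc⟩
  set p := T.cellOf i with hp
  set q := T.cellOf (i+1) with hq
  have hpm : p ∈ ydCells (List.replicate a b) := T.cellOf_mem h1 (by omega)
  have hqm : q ∈ ydCells (List.replicate a b) := T.cellOf_mem (by omega) (by omega)
  have hep : T.entry p = i := T.entry_cellOf h1 (by omega)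
  have heq : T.entry q = i + 1 := T.entry_cellOf (by omega) (by omega)
  have hmm : ((q.1, p.2) : ℕ × ℕ) ∈ ydCells (List.replicate a b) := by
    rw [mem_ydCells_replicate] at hpm hqm ⊢
    exact ⟨hqm.1, hpm.2⟩
  have hlt1 : T.entry p < T.entry (q.1, p.2) := by
    apply T.entry_lt_of_dominates (p := p) (q := (q.1, p.2)) hmm (le_of_lt hr) (le_refl _)
    intro hh
    have := congrArg Prod.fst hh
    simp only at this
    omega
  have hlt2 : T.entry (q.1, p.2) < T.entry q := by
    apply T.entry_lt_of_dominates (p := ((q.1 : ℕ), (p.2 : ℕ))) (q := q) hqm (le_refl _)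
      (le_of_lt hc)
    intro hh
    have := congrArg Prod.snd hh
    simp only at this
    omega
  omega

end RectFacts

section Families

set_option linter.unusedSectionVars false
set_option linter.unusedVariables false

/-- Column-strict plane partitions: rows weakly increase, columns strictly increase. -/
def IsCSFun (a b m : ℕ) (f : ℕ × ℕ → ℕ) : Prop :=
  (∀ p : ℕ × ℕ, ¬(p.1 < a ∧ p.2 < b) → f p = 0) ∧ (∀ p, f p ≤ m) ∧
  (∀ r c, r < a → c + 1 < b → f (r, c) ≤ f (r, c + 1)) ∧
  (∀ r c, r + 1 < a → c < b → f (r, c) < f (r + 1, c))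

/-- Strict plane partitions: rows and columns strictly increase. -/
def IsSFun (a b m : ℕ) (f : ℕ × ℕ → ℕ) : Prop :=
  (∀ p : ℕ × ℕ, ¬(p.1 < a ∧ p.2 < b) → f p = 0) ∧ (∀ p, f p ≤ m) ∧
  (∀ r c, r < a → c + 1 < b → f (r, c) < f (r, c + 1)) ∧
  (∀ r c, r + 1 < a → c < b → f (r, c) < f (r + 1, c))

def CSFun (a b m : ℕ) := {f : ℕ × ℕ → ℕ // IsCSFun a b m f}

def SFun (a b m : ℕ) := {f : ℕ × ℕ → ℕ // IsSFun a b m f}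

/-- Weakly increasing sequences of length `N` bounded by `m`, strict at positions of `S`. -/
def IsGFun (N m : ℕ) (S : Finset ℕ) (g : ℕ → ℕ) : Prop :=
  (∀ j, N ≤ j → g j = 0) ∧ (∀ j, g j ≤ m) ∧ (∀ j, j + 1 < N → g j ≤ g (j + 1)) ∧
  (∀ i ∈ S, 1 ≤ i → i < N → g (i - 1) < g i)

def GFun (N m : ℕ) (S : Finset ℕ) := {g : ℕ → ℕ // IsGFun N m S g}

/-- Strictly increasing sequences of length `N` bounded by `m`. -/
def IsSIFun (N m : ℕ) (g : ℕ → ℕ) : Prop :=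
  (∀ j, N ≤ j → g j = 0) ∧ (∀ j, g j ≤ m) ∧ (∀ j, j + 1 < N → g j < g (j + 1))

def SIFun (N m : ℕ) := {g : ℕ → ℕ // IsSIFun N m g}

instance CSFun.finite (a b m : ℕ) : Finite (CSFun a b m) := by
  apply Finite.of_injective (fun (f : CSFun a b m) (p : Fin a × Fin b) =>
    (⟨f.1 (p.1.1, p.2.1), Nat.lt_succ_of_le (f.2.2.1 _)⟩ : Fin (m + 1)))
  intro f g h
  apply Subtype.ext
  funext p
  by_cases hp : p.1 < a ∧ p.2 < b
  · have := congrFun h (⟨p.1, hp.1⟩, ⟨p.2, hp.2⟩)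
    simpa [Fin.ext_iff] using this
  · rw [f.2.1 p hp, g.2.1 p hp]

instance SFun.finite (a b m : ℕ) : Finite (SFun a b m) := by
  apply Finite.of_injective (fun (f : SFun a b m) (p : Fin a × Fin b) =>
    (⟨f.1 (p.1.1, p.2.1), Nat.lt_succ_of_le (f.2.2.1 _)⟩ : Fin (m + 1)))
  intro f g h
  apply Subtype.ext
  funext p
  by_cases hp : p.1 < a ∧ p.2 < b
  · have := congrFun h (⟨p.1, hp.1⟩, ⟨p.2, hp.2⟩)
    simpa [Fin.ext_iff] using this
  · rw [f.2.1 p hp, g.2.1 p hp]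

instance GFun.finite (N m : ℕ) (S : Finset ℕ) : Finite (GFun N m S) := by
  apply Finite.of_injective (fun (g : GFun N m S) (j : Fin N) =>
    (⟨g.1 j.1, Nat.lt_succ_of_le (g.2.2.1 _)⟩ : Fin (m + 1)))
  intro f g h
  apply Subtype.ext
  funext j
  by_cases hj : j < N
  · have := congrFun h ⟨j, hj⟩
    simpa [Fin.ext_iff] using this
  · rw [f.2.1 j (by omega), g.2.1 j (by omega)]

instance SIFun.finite (N m : ℕ) : Finite (SIFun N m) := by
  apply Finite.of_injective (fun (g : SIFun N m) (j : Fin N) =>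
    (⟨g.1 j.1, Nat.lt_succ_of_le (g.2.2.1 _)⟩ : Fin (m + 1)))
  intro f g h
  apply Subtype.ext
  funext j
  by_cases hj : j < N
  · have := congrFun h ⟨j, hj⟩
    simpa [Fin.ext_iff] using this
  · rw [f.2.1 j (by omega), g.2.1 j (by omega)]

lemma IsGFun.mono {N m : ℕ} {S : Finset ℕ} {g : ℕ → ℕ} (hg : IsGFun N m S g) :
    ∀ {i j : ℕ}, i ≤ j → j < N → g i ≤ g j := by
  intro i j hij hj
  induction j with
  | zero =>
    have hi0 : i = 0 := by omega
    rw [hi0]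
  | succ d ih =>
    rcases Nat.lt_or_ge i (d + 1) with h' | h'
    · have h1 : g i ≤ g d := ih (by omega) (by omega)
      exact le_trans h1 (hg.2.2.1 d hj)
    · have : i = d + 1 := by omega
      rw [this]

lemma IsSIFun.mono {N m : ℕ} {g : ℕ → ℕ} (hg : IsSIFun N m g) :
    ∀ {i j : ℕ}, i ≤ j → j < N → g i + (j - i) ≤ g j := by
  intro i j hij hj
  induction j with
  | zero =>
    have hi0 : i = 0 := by omega
    rw [hi0]
    omega
  | succ d ih =>
    rcases Nat.lt_or_ge i (d + 1) with h' | h'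
    · have h1 : g i + (d - i) ≤ g d := ih (by omega) (by omega)
      have h2 : g d < g (d + 1) := hg.2.2 d hj
      omega
    · have : i = d + 1 := by omega
      rw [this]
      omega

end Families

section Key

set_option linter.unusedSectionVars false

/-- A helper arithmetic fact. -/
lemma mul_add_lt_mul_add {K x1 y1 x2 y2 : ℕ} (hx : x1 < x2) (hy : y1 < K) :
    x1 * K + y1 < x2 * K + y2 := by
  have h1 : x1 * K + y1 < (x1 + 1) * K := by
    rw [add_mul, one_mul]; omega
  have h2 : (x1 + 1) * K ≤ x2 * K := Nat.mul_le_mul_right K hx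
  omega

lemma mul_add_inj {K x1 y1 x2 y2 : ℕ} (hy1 : y1 < K) (hy2 : y2 < K)
    (h : x1 * K + y1 = x2 * K + y2) : x1 = x2 ∧ y1 = y2 := by
  have hx : x1 = x2 := by
    rcases lt_trichotomy x1 x2 with hh | hh | hh
    · have := mul_add_lt_mul_add (y2 := y2) hh hy1; omega
    · exact hh
    · have := mul_add_lt_mul_add (y2 := y1) hh hy2; omega
  subst hx
  omega

variable {a b : ℕ}

/-- The standardization key of a filling. -/
def ppKey (a b : ℕ) (f : ℕ × ℕ → ℕ) (p : ℕ × ℕ) : ℕ :=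
  f p * (a * b) + ((a - 1 - p.1) * b + p.2)

lemma ppKey_snd_lt {p : ℕ × ℕ} (hp : p.1 < a ∧ p.2 < b) :
    (a - 1 - p.1) * b + p.2 < a * b := by
  have h1 : (a - 1 - p.1) * b + p.2 < (a - 1 - p.1) * b + b := by omega
  have h2 : (a - 1 - p.1) * b + b = (a - p.1) * b := by
    rw [show a - p.1 = (a - 1 - p.1) + 1 by omega, add_mul, one_mul]
  have h3 : (a - p.1) * b ≤ a * b := Nat.mul_le_mul_right b (by omega)
  omega

lemma ppKey_injOn {f : ℕ × ℕ → ℕ} {p q : ℕ × ℕ} (hp : p.1 < a ∧ p.2 < b)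
    (hq : q.1 < a ∧ q.2 < b) (h : ppKey a b f p = ppKey a b f q) : p = q := by
  obtain ⟨h1, h2⟩ := mul_add_inj (ppKey_snd_lt hp) (ppKey_snd_lt hq) h
  obtain ⟨h3, h4⟩ := mul_add_inj hp.2 hq.2 h2
  have : p.1 = q.1 := by omega
  exact Prod.ext this h4

lemma ppKey_lt_of_val_lt {f : ℕ × ℕ → ℕ} {p q : ℕ × ℕ} (hp : p.1 < a ∧ p.2 < b)
    (h : f p < f q) : ppKey a b f p < ppKey a b f q :=
  mul_add_lt_mul_add h (ppKey_snd_lt hp)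

lemma ppKey_lt_of_row_gt {f : ℕ × ℕ → ℕ} {p q : ℕ × ℕ} (hp : p.1 < a ∧ p.2 < b)
    (hq : q.1 < a ∧ q.2 < b) (hv : f p = f q) (hr : q.1 < p.1) :
    ppKey a b f p < ppKey a b f q := by
  rw [ppKey, ppKey, hv]
  have : (a - 1 - p.1) * b + p.2 < (a - 1 - q.1) * b + q.2 :=
    mul_add_lt_mul_add (by omega) hp.2
  omega

lemma ppKey_lt_of_col_lt {f : ℕ × ℕ → ℕ} {p q : ℕ × ℕ} (hv : f p = f q)
    (hr : p.1 = q.1) (hc : p.2 < q.2) : ppKey a b f p < ppKey a b f q := by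
  rw [ppKey, ppKey, hv, hr]
  omega

lemma val_le_of_ppKey_lt {f : ℕ × ℕ → ℕ} {p q : ℕ × ℕ} (hq : q.1 < a ∧ q.2 < b)
    (h : ppKey a b f p < ppKey a b f q) : f p ≤ f q := by
  by_contra hcon
  push_neg at hcon
  have := ppKey_lt_of_val_lt (a := a) (b := b) hq hcon
  omega

end Key

section Std

set_option linter.unusedSectionVars false
set_option linter.unusedVariables false

variable {a b m : ℕ}

lemma ppKey_injOn_cells (f : ℕ × ℕ → ℕ) :
    Set.InjOn (ppKey a b f) (ydCells (List.replicate a b)) := by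
  intro p hp q hq h
  exact ppKey_injOn (mem_ydCells_replicate.mp hp) (mem_ydCells_replicate.mp hq) h

/-- The standardization of a column-strict plane partition. -/
def stdEntry (a b : ℕ) (f : ℕ × ℕ → ℕ) : ℕ × ℕ → ℕ := fun p =>
  if p.1 < a ∧ p.2 < b then rankIn (ydCells (List.replicate a b)) (ppKey a b f) p else 0

def stdSYT (f : CSFun a b m) : SYT (List.replicate a b) where
  entry := stdEntry a b f.1
  zero_outside := by
    intro p hp
    rw [stdEntry, if_neg]
    rwa [mem_ydCells_replicate] at hp
  bijOn := by
    have hsum : (List.replicate a b).sum = a * b := sum_replicate'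
    have hcard : (ydCells (List.replicate a b)).card = a * b := card_ydCells_replicate
    constructor
    · intro p hp
      have hp' : p ∈ ydCells (List.replicate a b) := hp
      have hm := rankIn_mem (key := ppKey a b f.1) hp'
      rw [Finset.mem_Icc, hcard] at hm
      rw [Set.mem_Icc]
      simp only [stdEntry]
      rw [if_pos (mem_ydCells_replicate.mp hp'), hsum]
      exact hm
    constructor
    · intro p hp q hq h
      have hp' : p ∈ ydCells (List.replicate a b) := hp
      have hq' : q ∈ ydCells (List.replicate a b) := hq
      simp only [stdEntry] at h
      rw [if_pos (mem_ydCells_replicate.mp hp'), if_pos (mem_ydCells_replicate.mp hq')] at h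
      exact rankIn_injOn (ppKey_injOn_cells f.1) hp' hq' h
    · intro j hj
      rw [Set.mem_Icc, hsum] at hj
      obtain ⟨p, hp, hpe⟩ := rankIn_surjOn (ppKey_injOn_cells f.1) hj.1
        (by rw [hcard]; exact hj.2)
      refine ⟨p, hp, ?_⟩
      simp only [stdEntry]
      rw [if_pos (mem_ydCells_replicate.mp hp)]
      exact hpe
  row_incr := by
    intro r c hc
    have hc' := mem_ydCells_replicate.mp hc
    have hc1 : ((r : ℕ), (c : ℕ)).1 < a ∧ ((r : ℕ), (c : ℕ)).2 < b := by
      constructor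
      · exact hc'.1
      · simp only; omega
    have hmem : ((r : ℕ), (c : ℕ)) ∈ ydCells (List.replicate a b) :=
      mem_ydCells_replicate.mpr hc1
    simp only [stdEntry]
    rw [if_pos hc1, if_pos hc']
    apply rankIn_lt_rankIn hmem
    rcases Nat.eq_or_lt_of_le (f.2.2.2.1 r c hc'.1 (by simpa using hc'.2)) with h | h
    · exact ppKey_lt_of_col_lt h rfl (by omega)
    · exact ppKey_lt_of_val_lt hc1 h
  col_incr := by
    intro r c hc
    have hc' := mem_ydCells_replicate.mp hc
    have hc1 : ((r : ℕ), (c : ℕ)).1 < a ∧ ((r : ℕ), (c : ℕ)).2 < b := by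
      constructor
      · simp only; omega
      · exact hc'.2
    have hmem : ((r : ℕ), (c : ℕ)) ∈ ydCells (List.replicate a b) :=
      mem_ydCells_replicate.mpr hc1
    simp only [stdEntry]
    rw [if_pos hc1, if_pos hc']
    apply rankIn_lt_rankIn hmem
    exact ppKey_lt_of_val_lt hc1 (f.2.2.2.2 r c (by simpa using hc'.1) hc'.2)

lemma stdSYT_entry_lt_iff (f : CSFun a b m) {p q : ℕ × ℕ}
    (hp : p ∈ ydCells (List.replicate a b)) (hq : q ∈ ydCells (List.replicate a b)) :
    (stdSYT f).entry p < (stdSYT f).entry q ↔ ppKey a b f.1 p < ppKey a b f.1 q := by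
  show stdEntry a b f.1 p < stdEntry a b f.1 q ↔ _
  simp only [stdEntry]
  rw [if_pos (mem_ydCells_replicate.mp hp), if_pos (mem_ydCells_replicate.mp hq)]
  exact rankIn_lt_iff (ppKey_injOn_cells f.1) hp hq

lemma val_le_of_std {T : SYT (List.replicate a b)} {x : CSFun a b m} (h : stdSYT x = T)
    {p q : ℕ × ℕ} (hp : p ∈ ydCells (List.replicate a b))
    (hq : q ∈ ydCells (List.replicate a b)) (he : T.entry p < T.entry q) :
    x.1 p ≤ x.1 q := by
  subst h
  exact val_le_of_ppKey_lt (mem_ydCells_replicate.mp hq)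
    ((stdSYT_entry_lt_iff x hp hq).mp he)

lemma val_lt_of_std_descent {T : SYT (List.replicate a b)} {x : CSFun a b m}
    (h : stdSYT x = T) {p q : ℕ × ℕ} (hp : p ∈ ydCells (List.replicate a b))
    (hq : q ∈ ydCells (List.replicate a b)) (he : T.entry p < T.entry q)
    (hrow : p.1 < q.1) : x.1 p < x.1 q := by
  have hle := val_le_of_std h hp hq he
  rcases Nat.eq_or_lt_of_le hle with hv | hv
  · exfalso
    subst h
    have hkey : ppKey a b x.1 q < ppKey a b x.1 p :=
      ppKey_lt_of_row_gt (mem_ydCells_replicate.mp hq) (mem_ydCells_replicate.mp hp)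
        hv.symm hrow
    have := (stdSYT_entry_lt_iff x hp hq).mp he
    omega
  · exact hv

/-- If there is no descent in `[e, e')` then the row of `e'` is at most the row of `e`. -/
lemma row_le_of_no_descent (T : SYT (List.replicate a b)) {e : ℕ} (he : 1 ≤ e) :
    ∀ e' : ℕ, e ≤ e' → e' ≤ a * b →
    (∀ i, e ≤ i → i < e' → i ∉ desSet (List.replicate a b) T) →
    (T.cellOf e').1 ≤ (T.cellOf e).1 := by
  intro e'
  induction e' with
  | zero => intro h1 h2 h3; omega
  | succ d ih =>
    intro h1 h2 h3
    rcases Nat.eq_or_lt_of_le h1 with he' | he'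
    · rw [← he']
    · have hd : (T.cellOf (d+1)).1 ≤ (T.cellOf d).1 := by
        have hnd : d ∉ desSet (List.replicate a b) T := h3 d (by omega) (by omega)
        by_contra hcon
        push_neg at hcon
        apply hnd
        rw [mem_desSet_iff, sum_replicate']
        exact ⟨⟨by omega, by omega⟩, hcon⟩
      have := ih (by omega) (by omega) (fun i hi1 hi2 => h3 i hi1 (by omega))
      omega

lemma exists_descent_between (T : SYT (List.replicate a b)) {e e' : ℕ} (he : 1 ≤ e)
    (he' : e' ≤ a * b) (hlt : e < e') (hrow : (T.cellOf e).1 < (T.cellOf e').1) :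
    ∃ i, e ≤ i ∧ i < e' ∧ i ∈ desSet (List.replicate a b) T := by
  by_contra hcon
  push_neg at hcon
  have := row_le_of_no_descent T he e' (by omega) he'
    (fun i hi1 hi2 => hcon i hi1 hi2)
  omega

/-- The inverse of standardization given a tableau and a compatible sequence. -/
def unstd (a b : ℕ) (T : SYT (List.replicate a b)) (g : ℕ → ℕ) : ℕ × ℕ → ℕ := fun p =>
  if p.1 < a ∧ p.2 < b then g (T.entry p - 1) else 0

lemma unstd_isCS (T : SYT (List.replicate a b)) (g : GFun (a * b) m
    (desSet (List.replicate a b) T)) : IsCSFun a b m (unstd a b T g.1) := by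
  have hsum : (List.replicate a b).sum = a * b := sum_replicate'
  obtain ⟨hg0, hgm, hgmono, hgS⟩ := g.2
  refine ⟨?_, ?_, ?_, ?_⟩
  · intro p hp
    rw [unstd, if_neg hp]
  · intro p
    rw [unstd]
    split
    · exact hgm _
    · omega
  · intro r c hr hc
    have hm1 : ((r : ℕ), (c : ℕ)) ∈ ydCells (List.replicate a b) :=
      mem_ydCells_replicate.mpr ⟨hr, by omega⟩
    have hm2 : ((r : ℕ), (c + 1 : ℕ)) ∈ ydCells (List.replicate a b) :=
      mem_ydCells_replicate.mpr ⟨hr, hc⟩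
    have he : T.entry (r, c) < T.entry (r, c + 1) := T.row_incr r c hm2
    have hb1 : 1 ≤ T.entry (r, c) := (T.bijOn.mapsTo hm1).1
    have hb2 : T.entry (r, c + 1) ≤ a * b := by
      have := (T.bijOn.mapsTo hm2).2
      omega
    simp only [unstd]
    rw [if_pos (show (((r : ℕ), (c : ℕ)) : ℕ × ℕ).1 < a ∧ (((r : ℕ), (c : ℕ)) : ℕ × ℕ).2 < b from ⟨hr, by omega⟩),
      if_pos (show (((r : ℕ), (c + 1 : ℕ)) : ℕ × ℕ).1 < a ∧ (((r : ℕ), (c + 1 : ℕ)) : ℕ × ℕ).2 < b from ⟨hr, hc⟩)]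
    exact IsGFun.mono g.2 (i := T.entry (r, c) - 1) (j := T.entry (r, c + 1) - 1)
      (by omega) (by omega)
  · intro r c hr hc
    have hm1 : ((r : ℕ), (c : ℕ)) ∈ ydCells (List.replicate a b) :=
      mem_ydCells_replicate.mpr ⟨by omega, hc⟩
    have hm2 : ((r + 1 : ℕ), (c : ℕ)) ∈ ydCells (List.replicate a b) :=
      mem_ydCells_replicate.mpr ⟨hr, hc⟩
    have he : T.entry (r, c) < T.entry (r + 1, c) := T.col_incr r c hm2
    have hb1 : 1 ≤ T.entry (r, c) := (T.bijOn.mapsTo hm1).1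
    have hb2 : T.entry (r + 1, c) ≤ a * b := by
      have := (T.bijOn.mapsTo hm2).2
      omega
    set e := T.entry (r, c) with hee
    set e' := T.entry (r + 1, c) with hee'
    have hce : T.cellOf e = (r, c) := (T.eq_cellOf hm1 rfl).symm
    have hce' : T.cellOf e' = (r + 1, c) := (T.eq_cellOf hm2 rfl).symm
    have hrowlt : (T.cellOf e).1 < (T.cellOf e').1 := by
      rw [hce, hce']; omega
    obtain ⟨i, hi1, hi2, hi3⟩ := exists_descent_between T hb1 hb2 he hrowlt
    have hiIcc : i ∈ Finset.Icc 1 ((List.replicate a b).sum - 1) := desSet_subset hi3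
    rw [Finset.mem_Icc, hsum] at hiIcc
    have hstrict : g.1 (i - 1) < g.1 i := hgS i hi3 hiIcc.1 (by omega)
    have hmono1 : g.1 (e - 1) ≤ g.1 (i - 1) := IsGFun.mono g.2 (by omega) (by omega)
    have hmono2 : g.1 i ≤ g.1 (e' - 1) := IsGFun.mono g.2 (by omega) (by omega)
    simp only [unstd]
    rw [if_pos (show (((r : ℕ), (c : ℕ)) : ℕ × ℕ).1 < a ∧ (((r : ℕ), (c : ℕ)) : ℕ × ℕ).2 < b from ⟨by omega, hc⟩),
      if_pos (show (((r + 1 : ℕ), (c : ℕ)) : ℕ × ℕ).1 < a ∧ (((r + 1 : ℕ), (c : ℕ)) : ℕ × ℕ).2 < b from ⟨hr, hc⟩),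
      ← hee, ← hee']
    omega

end Std

section FiberEquiv

set_option linter.unusedSectionVars false
set_option linter.unusedVariables false

variable {a b m : ℕ}

lemma unstd_key_mono (T : SYT (List.replicate a b))
    (g : GFun (a * b) m (desSet (List.replicate a b) T)) {p q : ℕ × ℕ}
    (hp : p ∈ ydCells (List.replicate a b)) (hq : q ∈ ydCells (List.replicate a b))
    (he : T.entry p < T.entry q) :
    ppKey a b (unstd a b T g.1) p < ppKey a b (unstd a b T g.1) q := by
  have hsum : (List.replicate a b).sum = a * b := sum_replicate'
  have hp' := mem_ydCells_replicate.mp hp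
  have hq' := mem_ydCells_replicate.mp hq
  set e := T.entry p with hee
  set e' := T.entry q with hee'
  have hb1 : 1 ≤ e := (T.bijOn.mapsTo hp).1
  have hb2 : e' ≤ a * b := by have := (T.bijOn.mapsTo hq).2; omega
  have hfp : unstd a b T g.1 p = g.1 (e - 1) := by
    simp only [unstd]
    rw [if_pos hp', ← hee]
  have hfq : unstd a b T g.1 q = g.1 (e' - 1) := by
    simp only [unstd]
    rw [if_pos hq', ← hee']
  have hle : g.1 (e - 1) ≤ g.1 (e' - 1) :=
    IsGFun.mono g.2 (by omega) (by omega)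
  rcases Nat.eq_or_lt_of_le hle with hv | hv
  · -- equal values: no descent between, rows weakly decrease
    have hnd : ∀ i, e ≤ i → i < e' → i ∉ desSet (List.replicate a b) T := by
      intro i hi1 hi2 hiS
      have hiIcc := desSet_subset hiS
      rw [Finset.mem_Icc, hsum] at hiIcc
      have h1 : g.1 (e - 1) ≤ g.1 (i - 1) := IsGFun.mono g.2 (by omega) (by omega)
      have h2 : g.1 (i - 1) < g.1 i := g.2.2.2.2 i hiS hiIcc.1 (by omega)
      have h3 : g.1 i ≤ g.1 (e' - 1) := IsGFun.mono g.2 (by omega) (by omega)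
      omega
    have hrowle : (T.cellOf e').1 ≤ (T.cellOf e).1 :=
      row_le_of_no_descent T hb1 e' (le_of_lt he) hb2 hnd
    have hcp : T.cellOf e = p := (T.eq_cellOf hp hee.symm).symm
    have hcq : T.cellOf e' = q := (T.eq_cellOf hq hee'.symm).symm
    rw [hcp, hcq] at hrowle
    rcases Nat.eq_or_lt_of_le hrowle with hr | hr
    · have hcol : p.2 < q.2 := T.col_lt_of_same_row hp hq hr.symm he
      apply ppKey_lt_of_col_lt _ hr.symm hcol
      rw [hfp, hfq, hv]
    · apply ppKey_lt_of_row_gt hp' hq' _ hr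
      rw [hfp, hfq, hv]
  · apply ppKey_lt_of_val_lt hp'
    rw [hfp, hfq]
    exact hv

lemma std_unstd (T : SYT (List.replicate a b))
    (g : GFun (a * b) m (desSet (List.replicate a b) T)) :
    stdSYT (⟨unstd a b T g.1, unstd_isCS T g⟩ : CSFun a b m) = T := by
  classical
  have hsum : (List.replicate a b).sum = a * b := sum_replicate'
  set x : CSFun a b m := ⟨unstd a b T g.1, unstd_isCS T g⟩ with hx
  apply SYT.ext'
  funext p
  by_cases hp : p ∈ ydCells (List.replicate a b)
  · have hp' := mem_ydCells_replicate.mp hp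
    have hb1 : 1 ≤ T.entry p := (T.bijOn.mapsTo hp).1
    have hb2 : T.entry p ≤ a * b := by have := (T.bijOn.mapsTo hp).2; omega
    show stdEntry a b x.1 p = T.entry p
    simp only [stdEntry]
    rw [if_pos hp']
    have hfilter : ((ydCells (List.replicate a b)).filter
        fun q => ppKey a b x.1 q < ppKey a b x.1 p) =
        ((ydCells (List.replicate a b)).filter fun q => T.entry q < T.entry p) := by
      apply Finset.filter_congr
      intro q hq
      constructor
      · intro hk
        rcases lt_trichotomy (T.entry q) (T.entry p) with h' | h' | h'
        · exact h'
        · exfalso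
          have : q = p := T.bijOn.injOn hq hp h'
          rw [this] at hk
          omega
        · exfalso
          have := unstd_key_mono T g hp hq h'
          show False
          simp only [hx] at hk
          omega
      · intro h'
        exact unstd_key_mono T g hq hp h'
    rw [rankIn, hfilter, T.card_lt_entry hb1 hb2]
    omega
  · rw [(stdSYT x).zero_outside p hp, T.zero_outside p hp]

/-- The fibers of standardization are compatible sequences. -/
noncomputable def fiberEquiv (T : SYT (List.replicate a b)) :
    {x : CSFun a b m // stdSYT x = T} ≃ GFun (a * b) m (desSet (List.replicate a b) T) where
  toFun x := ⟨fun j => if j < a * b then x.1.1 (T.cellOf (j + 1)) else 0, by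
    have hsum : (List.replicate a b).sum = a * b := sum_replicate'
    refine ⟨?_, ?_, ?_, ?_⟩
    · intro j hj
      beta_reduce
      rw [if_neg (by omega)]
    · intro j
      beta_reduce
      split
      · exact x.1.2.2.1 _
      · omega
    · intro j hj
      beta_reduce
      rw [if_pos (by omega), if_pos (by omega)]
      have h1 : T.cellOf (j + 1) ∈ ydCells (List.replicate a b) :=
        T.cellOf_mem (by omega) (by omega)
      have h2 : T.cellOf (j + 2) ∈ ydCells (List.replicate a b) :=
        T.cellOf_mem (by omega) (by omega)
      have he : T.entry (T.cellOf (j + 1)) < T.entry (T.cellOf (j + 2)) := by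
        rw [T.entry_cellOf (by omega) (by omega), T.entry_cellOf (by omega) (by omega)]
        omega
      exact val_le_of_std x.2 h1 h2 he
    · intro i hiS hi1 hi2
      beta_reduce
      rw [if_pos (by omega), if_pos (by omega)]
      rw [mem_desSet_iff, hsum] at hiS
      have h1 : T.cellOf i ∈ ydCells (List.replicate a b) :=
        T.cellOf_mem (by omega) (by omega)
      have h2 : T.cellOf (i + 1) ∈ ydCells (List.replicate a b) :=
        T.cellOf_mem (by omega) (by omega)
      have he : T.entry (T.cellOf i) < T.entry (T.cellOf (i + 1)) := by
        rw [T.entry_cellOf (by omega) (by omega), T.entry_cellOf (by omega) (by omega)]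
        omega
      have := val_lt_of_std_descent x.2 h1 h2 he hiS.2
      rw [show i - 1 + 1 = i by omega]
      exact this⟩
  invFun g := ⟨⟨unstd a b T g.1, unstd_isCS T g⟩, std_unstd T g⟩
  left_inv := by
    intro x
    have hsum : (List.replicate a b).sum = a * b := sum_replicate'
    apply Subtype.ext
    apply Subtype.ext
    funext p
    show unstd a b T _ p = x.1.1 p
    by_cases hp : p.1 < a ∧ p.2 < b
    · have hpm : p ∈ ydCells (List.replicate a b) := mem_ydCells_replicate.mpr hp
      have hb1 : 1 ≤ T.entry p := (T.bijOn.mapsTo hpm).1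
      have hb2 : T.entry p ≤ a * b := by have := (T.bijOn.mapsTo hpm).2; omega
      simp only [unstd]
      rw [if_pos hp, if_pos (by omega), show T.entry p - 1 + 1 = T.entry p by omega,
        T.cellOf_entry hpm]
    · simp only [unstd]
      rw [if_neg hp, (x.1.2.1 p hp).symm]
  right_inv := by
    intro g
    have hsum : (List.replicate a b).sum = a * b := sum_replicate'
    apply Subtype.ext
    funext j
    show (if j < a * b then unstd a b T g.1 (T.cellOf (j + 1)) else 0) = g.1 j
    by_cases hj : j < a * b
    · rw [if_pos hj]
      have hpm : T.cellOf (j + 1) ∈ ydCells (List.replicate a b) :=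
        T.cellOf_mem (by omega) (by omega)
      simp only [unstd]
      rw [if_pos (mem_ydCells_replicate.mp hpm),
        T.entry_cellOf (by omega) (by omega)]
      simp
    · rw [if_neg hj, (g.2.1 j (by omega)).symm]

noncomputable instance (lam : List ℕ) : Fintype (SYT lam) := Fintype.ofFinite _

lemma nat_card_sigma {ι : Type*} [Fintype ι] (β : ι → Type*) [∀ i, Finite (β i)] :
    Nat.card (Σ i, β i) = ∑ i, Nat.card (β i) := by
  letI : ∀ i, Fintype (β i) := fun i => Fintype.ofFinite _
  simp only [Nat.card_eq_fintype_card]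
  exact Fintype.card_sigma

lemma cardCS_eq_sum (a b m : ℕ) :
    Nat.card (CSFun a b m) = ∑ T : SYT (List.replicate a b),
      Nat.card (GFun (a * b) m (desSet (List.replicate a b) T)) := by
  calc Nat.card (CSFun a b m)
      = Nat.card (Σ T : SYT (List.replicate a b), {x : CSFun a b m // stdSYT x = T}) :=
        (Nat.card_congr (Equiv.sigmaFiberEquiv stdSYT)).symm
    _ = ∑ T : SYT (List.replicate a b), Nat.card {x : CSFun a b m // stdSYT x = T} :=
        nat_card_sigma _
    _ = ∑ T : SYT (List.replicate a b),
          Nat.card (GFun (a * b) m (desSet (List.replicate a b) T)) :=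
        Finset.sum_congr rfl (fun T _ => Nat.card_congr (fiberEquiv T))

end FiberEquiv

section CountG

set_option linter.unusedSectionVars false
set_option linter.unusedVariables false

variable {N m : ℕ} {S : Finset ℕ}

/-- Number of positions in `[1, j]` that are not strict positions. -/
def csum (S : Finset ℕ) (j : ℕ) : ℕ :=
  ((Finset.Icc 1 j).filter (fun i => i ∉ S)).card

lemma csum_le (S : Finset ℕ) (j : ℕ) : csum S j ≤ j := by
  have h := Finset.card_le_card (Finset.filter_subset (fun i => i ∉ S) (Finset.Icc 1 j))
  rw [Nat.card_Icc] at h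
  rw [csum]
  omega

lemma csum_succ_mem {i : ℕ} (hi : 1 ≤ i) (hmem : i ∈ S) : csum S i = csum S (i - 1) := by
  classical
  have hicc : Finset.Icc 1 i = insert i (Finset.Icc 1 (i - 1)) := by
    ext x
    rw [Finset.mem_insert, Finset.mem_Icc, Finset.mem_Icc]
    omega
  rw [csum, csum, hicc, Finset.filter_insert, if_neg (by simp [hmem])]

lemma csum_succ_not_mem {i : ℕ} (hi : 1 ≤ i) (hmem : i ∉ S) :
    csum S i = csum S (i - 1) + 1 := by
  classical
  have hicc : Finset.Icc 1 i = insert i (Finset.Icc 1 (i - 1)) := by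
    ext x
    rw [Finset.mem_insert, Finset.mem_Icc, Finset.mem_Icc]
    omega
  rw [csum, csum, hicc, Finset.filter_insert, if_pos (by simp [hmem]),
    Finset.card_insert_of_notMem]
  intro hcon
  have := (Finset.mem_filter.mp hcon).1
  rw [Finset.mem_Icc] at this
  omega

lemma csum_split (S : Finset ℕ) (j : ℕ) :
    csum S j + ((Finset.Icc 1 j).filter (fun i => i ∈ S)).card = j := by
  classical
  rw [csum, add_comm]
  rw [Finset.card_filter_add_card_filter_not]
  · rw [Nat.card_Icc]; omega

lemma card_inter_le (S : Finset ℕ) (j : ℕ) :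
    ((Finset.Icc 1 j).filter (fun i => i ∈ S)).card ≤ S.card := by
  classical
  apply Finset.card_le_card
  intro x hx
  exact (Finset.mem_filter.mp hx).2

lemma card_le_inter_add (hS : S ⊆ Finset.Icc 1 (N - 1)) (j : ℕ) :
    S.card ≤ ((Finset.Icc 1 j).filter (fun i => i ∈ S)).card + (N - 1 - j) := by
  classical
  have hsub : S ⊆ ((Finset.Icc 1 j).filter (fun i => i ∈ S)) ∪ Finset.Icc (j + 1) (N - 1) := by
    intro x hx
    have hx' := hS hx
    rw [Finset.mem_Icc] at hx'
    rw [Finset.mem_union, Finset.mem_filter]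
    rcases le_or_gt x j with h | h
    · exact Or.inl ⟨Finset.mem_Icc.mpr ⟨by omega, h⟩, hx⟩
    · exact Or.inr (Finset.mem_Icc.mpr ⟨by omega, by omega⟩)
  have := Finset.card_le_card hsub
  have h2 := Finset.card_union_le ((Finset.Icc 1 j).filter (fun i => i ∈ S))
    (Finset.Icc (j + 1) (N - 1))
  rw [Nat.card_Icc] at h2
  omega

/-- From sequences with prescribed strictness to strictly increasing sequences. -/
noncomputable def gfunToSI (hS : S ⊆ Finset.Icc 1 (N - 1)) :
    GFun N m S ≃ SIFun N (m + (N - 1 - S.card)) where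
  toFun g := ⟨fun j => if j < N then g.1 j + csum S j else 0, by
    have hcard : S.card ≤ N - 1 := by
      have := Finset.card_le_card hS
      rw [Nat.card_Icc] at this
      omega
    refine ⟨?_, ?_, ?_⟩
    · intro j hj
      beta_reduce
      rw [if_neg (by omega)]
    · intro j
      beta_reduce
      split
      · next hj =>
        have h1 := g.2.2.1 j
        have h2 := csum_split S j
        have h3 := card_le_inter_add hS j
        have h4 := card_inter_le S j
        omega
      · omega
    · intro j hj
      beta_reduce
      rw [if_pos (by omega), if_pos (by omega)]
      by_cases hmem : (j + 1) ∈ S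
      · have h1 : g.1 j < g.1 (j + 1) := by
          have := g.2.2.2.2 (j + 1) hmem (by omega) (by omega)
          simpa using this
        have h2 : csum S (j + 1) = csum S j := by
          have := csum_succ_mem (S := S) (i := j + 1) (by omega) hmem
          simpa using this
        omega
      · have h1 : g.1 j ≤ g.1 (j + 1) := g.2.2.2.1 j hj
        have h2 : csum S (j + 1) = csum S j + 1 := by
          have := csum_succ_not_mem (S := S) (i := j + 1) (by omega) hmem
          simpa using this
        omega⟩
  invFun h := ⟨fun j => if j < N then h.1 j - csum S j else 0, by
    have hcard : S.card ≤ N - 1 := by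
      have := Finset.card_le_card hS
      rw [Nat.card_Icc] at this
      omega
    have hlow : ∀ j, j < N → csum S j ≤ h.1 j := by
      intro j hj
      have := IsSIFun.mono h.2 (i := 0) (j := j) (by omega) hj
      have := csum_le S j
      omega
    refine ⟨?_, ?_, ?_, ?_⟩
    · intro j hj
      beta_reduce
      rw [if_neg (by omega)]
    · intro j
      beta_reduce
      split
      · next hj =>
        have h1 := IsSIFun.mono h.2 (i := j) (j := N - 1) (by omega) (by omega)
        have h2 := h.2.2.1 (N - 1)
        have h3 := csum_split S j
        have h4 := card_le_inter_add hS j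
        have h5 := card_inter_le S j
        omega
      · omega
    · intro j hj
      beta_reduce
      rw [if_pos (by omega), if_pos (by omega)]
      have h1 : h.1 j < h.1 (j + 1) := h.2.2.2 j hj
      have h2 : csum S (j + 1) ≤ csum S j + 1 := by
        by_cases hmem : (j + 1) ∈ S
        · have := csum_succ_mem (S := S) (i := j + 1) (by omega) hmem
          simp at this
          omega
        · have := csum_succ_not_mem (S := S) (i := j + 1) (by omega) hmem
          simp at this
          omega
      have h3 := hlow j (by omega)
      omega
    · intro i hiS hi1 hi2
      beta_reduce
      rw [if_pos (by omega), if_pos (by omega)]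
      have h1 : h.1 (i - 1) < h.1 i := by
        have := h.2.2.2 (i - 1) (by omega)
        rw [show i - 1 + 1 = i by omega] at this
        exact this
      have h2 : csum S i = csum S (i - 1) := csum_succ_mem hi1 hiS
      have h3 := hlow (i - 1) (by omega)
      omega⟩
  left_inv := by
    intro g
    apply Subtype.ext
    funext j
    show (if j < N then (if j < N then g.1 j + csum S j else 0) - csum S j else 0) = g.1 j
    by_cases hj : j < N
    · rw [if_pos hj, if_pos hj]
      omega
    · rw [if_neg hj, (g.2.1 j (by omega)).symm]
  right_inv := by
    intro h
    apply Subtype.ext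
    funext j
    show (if j < N then (if j < N then h.1 j - csum S j else 0) + csum S j else 0) = h.1 j
    by_cases hj : j < N
    · rw [if_pos hj, if_pos hj]
      have := IsSIFun.mono h.2 (i := 0) (j := j) (by omega) hj
      have := csum_le S j
      omega
    · rw [if_neg hj, (h.2.1 j (by omega)).symm]

/-- Strictly increasing sequences are subsets. -/
noncomputable def siToSubset (N B : ℕ) :
    SIFun N B ≃ {s : Finset ℕ // s ∈ Finset.powersetCard N (Finset.range (B + 1))} where
  toFun h := ⟨(Finset.range N).image h.1, by
    rw [Finset.mem_powersetCard]
    constructor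
    · intro x hx
      obtain ⟨j, hj, rfl⟩ := Finset.mem_image.mp hx
      rw [Finset.mem_range]
      exact Nat.lt_succ_of_le (h.2.2.1 j)
    · rw [Finset.card_image_of_injOn, Finset.card_range]
      intro i hi j hj hij
      rw [Finset.mem_coe, Finset.mem_range] at hi hj
      by_contra hne
      rcases Nat.lt_or_ge i j with hlt | hge
      · have := IsSIFun.mono h.2 (i := i) (j := j) (by omega) hj
        omega
      · have hlt : j < i := by omega
        have := IsSIFun.mono h.2 (i := j) (j := i) (by omega) hi
        omega⟩
  invFun s := ⟨fun j => if hj : j < N then (s.1.orderEmbOfFin (by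
      have := (Finset.mem_powersetCard.mp s.2).2
      exact this)) ⟨j, hj⟩ else 0, by
    refine ⟨?_, ?_, ?_⟩
    · intro j hj
      beta_reduce
      rw [dif_neg (by omega)]
    · intro j
      beta_reduce
      split
      · next hj =>
        have hmem := Finset.orderEmbOfFin_mem s.1 (Finset.mem_powersetCard.mp s.2).2 ⟨j, hj⟩
        have := (Finset.mem_powersetCard.mp s.2).1 hmem
        rw [Finset.mem_range] at this
        omega
      · omega
    · intro j hj
      beta_reduce
      rw [dif_pos (by omega), dif_pos (by omega)]
      apply (Finset.orderEmbOfFin s.1 _).strictMono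
      exact Fin.mk_lt_mk.mpr (by omega)⟩
  left_inv := by
    intro h
    apply Subtype.ext
    funext j
    show (if hj : j < N then (((Finset.range N).image h.1).orderEmbOfFin _) ⟨j, hj⟩ else 0)
      = h.1 j
    by_cases hj : j < N
    · rw [dif_pos hj]
      have hcard : ((Finset.range N).image h.1).card = N := by
        rw [Finset.card_image_of_injOn, Finset.card_range]
        intro i hi j hj hij
        rw [Finset.mem_coe, Finset.mem_range] at hi hj
        by_contra hne
        rcases Nat.lt_or_ge i j with hlt | hge
        · have := IsSIFun.mono h.2 (i := i) (j := j) (by omega) hj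
          omega
        · have hlt : j < i := by omega
          have := IsSIFun.mono h.2 (i := j) (j := i) (by omega) hi
          omega
      have huniq := Finset.orderEmbOfFin_unique (f := fun i : Fin N => h.1 i.1) hcard
        (fun i => Finset.mem_image_of_mem h.1 (Finset.mem_range.mpr i.2))
        (by
          intro i j hij
          have := IsSIFun.mono h.2 (i := i.1) (j := j.1) (le_of_lt hij) j.2
          have : h.1 i.1 < h.1 j.1 := by
            have hd : (i : ℕ) < (j : ℕ) := hij
            omega
          exact this)
      have := congrFun huniq ⟨j, hj⟩
      simp only at this
      rw [← this]
    · rw [dif_neg hj, (h.2.1 j (by omega)).symm]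
  right_inv := by
    intro s
    apply Subtype.ext
    have hcard := (Finset.mem_powersetCard.mp s.2).2
    show (Finset.range N).image
      (fun j => if hj : j < N then (s.1.orderEmbOfFin hcard) ⟨j, hj⟩ else 0) = s.1
    ext y
    constructor
    · intro hy
      obtain ⟨j, hj, hje⟩ := Finset.mem_image.mp hy
      rw [Finset.mem_range] at hj
      rw [← hje, dif_pos hj]
      exact Finset.orderEmbOfFin_mem s.1 hcard ⟨j, hj⟩
    · intro hy
      have hr : y ∈ Set.range (s.1.orderEmbOfFin hcard) := by
        rw [Finset.range_orderEmbOfFin]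
        exact hy
      obtain ⟨i, hi⟩ := hr
      apply Finset.mem_image.mpr
      refine ⟨i.1, Finset.mem_range.mpr i.2, ?_⟩
      rw [dif_pos i.2]
      simp only [Fin.eta]
      exact hi

lemma card_GFun (hN : 1 ≤ N) (hS : S ⊆ Finset.Icc 1 (N - 1)) :
    Nat.card (GFun N m S) = (m + N - S.card).choose N := by
  have hcard : S.card ≤ N - 1 := by
    have := Finset.card_le_card hS
    rw [Nat.card_Icc] at this
    omega
  rw [Nat.card_congr (gfunToSI hS), Nat.card_congr (siToSubset N (m + (N - 1 - S.card))),
    Nat.card_eq_finsetCard, Finset.card_powersetCard, Finset.card_range]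
  congr 1
  omega

end CountG

section Shift

set_option linter.unusedSectionVars false
set_option linter.unusedVariables false

variable {a b m B : ℕ}

lemma sfun_row_gap {f : ℕ × ℕ → ℕ} (hf : IsSFun a b B f) {r : ℕ} (hr : r < a) :
    ∀ {c c' : ℕ}, c ≤ c' → c' < b → f (r, c) + (c' - c) ≤ f (r, c') := by
  intro c c' hcc hc'
  induction c' with
  | zero =>
    have hc0 : c = 0 := by omega
    rw [hc0]
    omega
  | succ d ih =>
    rcases Nat.lt_or_ge c (d + 1) with h' | h'
    · have h1 : f (r, c) + (d - c) ≤ f (r, d) := ih (by omega) (by omega)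
      have h2 : f (r, d) < f (r, d + 1) := hf.2.2.1 r d hr hc'
      omega
    · have : c = d + 1 := by omega
      rw [this]
      omega

lemma sfun_ge_col {f : ℕ × ℕ → ℕ} (hf : IsSFun a b B f) {r c : ℕ} (hr : r < a)
    (hc : c < b) : c ≤ f (r, c) := by
  have := sfun_row_gap hf hr (c := 0) (c' := c) (by omega) hc
  omega

lemma sfun_upper {f : ℕ × ℕ → ℕ} (hf : IsSFun a b B f) {r c : ℕ} (hr : r < a)
    (hc : c < b) : f (r, c) + (b - 1 - c) ≤ B := by
  have h1 := sfun_row_gap hf hr (c := c) (c' := b - 1) (by omega) (by omega)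
  have h2 := hf.2.1 (r, b - 1)
  omega

/-- Adding the column index turns column-strict into strict. -/
noncomputable def csToS (hb : 1 ≤ b) : CSFun a b m ≃ SFun a b (m + b - 1) where
  toFun f := ⟨fun p => if p.1 < a ∧ p.2 < b then f.1 p + p.2 else 0, by
    obtain ⟨h0, hm, hrow, hcol⟩ := f.2
    refine ⟨?_, ?_, ?_, ?_⟩
    · intro p hp
      beta_reduce
      rw [if_neg hp]
    · intro p
      beta_reduce
      split
      · next hp =>
        have := hm p
        omega
      · omega
    · intro r c hr hc
      beta_reduce
      rw [if_pos ⟨hr, by omega⟩, if_pos ⟨hr, hc⟩]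
      have := hrow r c hr hc
      simp only at *
      omega
    · intro r c hr hc
      beta_reduce
      rw [if_pos ⟨by omega, hc⟩, if_pos ⟨hr, hc⟩]
      have := hcol r c hr hc
      simp only at *
      omega⟩
  invFun f := ⟨fun p => if p.1 < a ∧ p.2 < b then f.1 p - p.2 else 0, by
    obtain ⟨h0, hm, hrow, hcol⟩ := f.2
    refine ⟨?_, ?_, ?_, ?_⟩
    · intro p hp
      beta_reduce
      rw [if_neg hp]
    · intro p
      beta_reduce
      split
      · next hp =>
        have hu := sfun_upper f.2 hp.1 hp.2
        rw [Prod.mk.eta] at hu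
        omega
      · omega
    · intro r c hr hc
      beta_reduce
      rw [if_pos ⟨hr, by omega⟩, if_pos ⟨hr, hc⟩]
      have h1 := hrow r c hr hc
      have h2 := sfun_ge_col f.2 hr (show c < b by omega)
      simp only at *
      omega
    · intro r c hr hc
      beta_reduce
      rw [if_pos ⟨by omega, hc⟩, if_pos ⟨hr, hc⟩]
      have h1 := hcol r c hr hc
      have h2 := sfun_ge_col f.2 (show r < a by omega) hc
      simp only at *
      omega⟩
  left_inv := by
    intro f
    apply Subtype.ext
    funext p
    show (if p.1 < a ∧ p.2 < b then
      (if p.1 < a ∧ p.2 < b then f.1 p + p.2 else 0) - p.2 else 0) = f.1 p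
    by_cases hp : p.1 < a ∧ p.2 < b
    · rw [if_pos hp, if_pos hp]
      omega
    · rw [if_neg hp, (f.2.1 p hp).symm]
  right_inv := by
    intro f
    apply Subtype.ext
    funext p
    show (if p.1 < a ∧ p.2 < b then
      (if p.1 < a ∧ p.2 < b then f.1 p - p.2 else 0) + p.2 else 0) = f.1 p
    by_cases hp : p.1 < a ∧ p.2 < b
    · rw [if_pos hp, if_pos hp]
      have := sfun_ge_col f.2 hp.1 hp.2
      have h2 : ((p.1 : ℕ), (p.2 : ℕ)) = p := by
        ext <;> rfl
      rw [h2] at this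
      omega
    · rw [if_neg hp, (f.2.1 p hp).symm]

/-- Transposition of strict plane partitions. -/
noncomputable def sTranspose (a b B : ℕ) : SFun a b B ≃ SFun b a B where
  toFun f := ⟨fun p => f.1 (p.2, p.1), by
    obtain ⟨h0, hm, hrow, hcol⟩ := f.2
    refine ⟨?_, ?_, ?_, ?_⟩
    · intro p hp
      beta_reduce
      apply h0
      simp only
      omega
    · intro p
      exact hm _
    · intro r c hr hc
      exact hcol c r hc hr
    · intro r c hr hc
      exact hrow c r hc hr⟩
  invFun f := ⟨fun p => f.1 (p.2, p.1), by
    obtain ⟨h0, hm, hrow, hcol⟩ := f.2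
    refine ⟨?_, ?_, ?_, ?_⟩
    · intro p hp
      beta_reduce
      apply h0
      simp only
      omega
    · intro p
      exact hm _
    · intro r c hr hc
      exact hcol c r hc hr
    · intro r c hr hc
      exact hrow c r hc hr⟩
  left_inv := by
    intro f
    apply Subtype.ext
    funext p
    rfl
  right_inv := by
    intro f
    apply Subtype.ext
    funext p
    rfl

lemma card_CS_chain (a b m : ℕ) (ha : 1 ≤ a) (hb : 1 ≤ b) (hab : a ≤ b) :
    Nat.card (CSFun a b m) = Nat.card (CSFun b a (m + b - a)) := by
  have e1 : CSFun a b m ≃ SFun a b (m + b - 1) := csToS hb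
  have e2 : SFun a b (m + b - 1) ≃ SFun b a (m + b - 1) := sTranspose a b _
  have e3 : CSFun b a (m + b - a) ≃ SFun b a (m + b - a + a - 1) := csToS ha
  have h : m + b - a + a - 1 = m + b - 1 := by omega
  rw [Nat.card_congr e1, Nat.card_congr e2, Nat.card_congr e3, h]

end Shift

section Transpose

set_option linter.unusedSectionVars false
set_option linter.unusedVariables false

variable {a b : ℕ}

/-- Transposition of standard Young tableaux of rectangular shape. -/
def SYT.transpose (T : SYT (List.replicate a b)) : SYT (List.replicate b a) where
  entry := fun p => T.entry (p.2, p.1)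
  zero_outside := by
    intro p hp
    beta_reduce
    apply T.zero_outside
    rw [mem_ydCells_replicate] at hp ⊢
    simp only
    tauto
  bijOn := by
    have hsum1 : (List.replicate a b).sum = a * b := sum_replicate'
    have hsum2 : (List.replicate b a).sum = b * a := sum_replicate'
    have hmul : b * a = a * b := Nat.mul_comm b a
    refine ⟨?_, ?_, ?_⟩
    · intro p hp
      have hp' := mem_ydCells_replicate.mp hp
      have hmem : ((p.2 : ℕ), (p.1 : ℕ)) ∈ ydCells (List.replicate a b) :=
        mem_ydCells_replicate.mpr ⟨hp'.2, hp'.1⟩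
      have hI := T.bijOn.mapsTo hmem
      rw [Set.mem_Icc] at hI
      rw [hsum1] at hI
      beta_reduce
      rw [Set.mem_Icc, hsum2]
      constructor
      · exact hI.1
      · omega
    · intro p hp q hq h
      have hp' := mem_ydCells_replicate.mp hp
      have hq' := mem_ydCells_replicate.mp hq
      have hmp : ((p.2 : ℕ), (p.1 : ℕ)) ∈ ydCells (List.replicate a b) :=
        mem_ydCells_replicate.mpr ⟨hp'.2, hp'.1⟩
      have hmq : ((q.2 : ℕ), (q.1 : ℕ)) ∈ ydCells (List.replicate a b) :=
        mem_ydCells_replicate.mpr ⟨hq'.2, hq'.1⟩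
      have := T.bijOn.injOn hmp hmq h
      rw [Prod.ext_iff] at this ⊢
      simp only at this
      exact ⟨this.2, this.1⟩
    · intro j hj
      rw [Set.mem_Icc, hsum2] at hj
      obtain ⟨q, hq, hqe⟩ := T.bijOn.surjOn (Set.mem_Icc.mpr
        ⟨hj.1, by rw [hsum1]; omega⟩)
      clear hmul
      have hq' := mem_ydCells_replicate.mp hq
      refine ⟨(q.2, q.1), ?_, ?_⟩
      · exact mem_ydCells_replicate.mpr ⟨hq'.2, hq'.1⟩
      · show T.entry (q.1, q.2) = j
        rw [Prod.mk.eta]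
        exact hqe
  row_incr := by
    intro r c hc
    have hc' := mem_ydCells_replicate.mp hc
    exact T.col_incr c r (mem_ydCells_replicate.mpr ⟨by simpa using hc'.2, hc'.1⟩)
  col_incr := by
    intro r c hc
    have hc' := mem_ydCells_replicate.mp hc
    exact T.row_incr c r (mem_ydCells_replicate.mpr ⟨hc'.2, by simpa using hc'.1⟩)

lemma SYT.transpose_transpose (T : SYT (List.replicate a b)) :
    T.transpose.transpose = T := by
  apply SYT.ext'
  funext p
  show T.entry ((p.2, p.1).2, (p.2, p.1).1) = T.entry p
  rw [Prod.mk.eta]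

lemma SYT.transpose_cellOf (T : SYT (List.replicate a b)) {i : ℕ} (h1 : 1 ≤ i)
    (h2 : i ≤ a * b) :
    T.transpose.cellOf i = ((T.cellOf i).2, (T.cellOf i).1) := by
  have hsum1 : (List.replicate a b).sum = a * b := sum_replicate'
  have hsum2 : (List.replicate b a).sum = b * a := sum_replicate'
  have hmul : b * a = a * b := Nat.mul_comm b a
  have hm := T.cellOf_mem h1 (by omega)
  have hm' := mem_ydCells_replicate.mp hm
  symm
  apply T.transpose.eq_cellOf
  · exact mem_ydCells_replicate.mpr ⟨hm'.2, hm'.1⟩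
  · show T.entry (((T.cellOf i).2, (T.cellOf i).1).2, ((T.cellOf i).2, (T.cellOf i).1).1) = i
    simp only [Prod.mk.eta]
    exact T.entry_cellOf h1 (by omega)

lemma desSet_transpose (T : SYT (List.replicate a b)) :
    desSet (List.replicate b a) T.transpose =
      (Finset.Icc 1 (a * b - 1)) \ desSet (List.replicate a b) T := by
  have hsum1 : (List.replicate a b).sum = a * b := sum_replicate'
  have hsum2 : (List.replicate b a).sum = b * a := sum_replicate'
  have hmul : b * a = a * b := Nat.mul_comm b a
  ext i
  rw [Finset.mem_sdiff, mem_desSet_iff, mem_desSet_iff, hsum1, hsum2, Finset.mem_Icc]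
  constructor
  · rintro ⟨⟨hi1, hi2⟩, hlt⟩
    rw [T.transpose_cellOf hi1 (by omega), T.transpose_cellOf (by omega) (by omega)] at hlt
    simp only at hlt
    refine ⟨⟨hi1, by omega⟩, ?_⟩
    rintro ⟨-, hrow⟩
    exact SYT.consec_not_both T hi1 (by omega) ⟨hrow, hlt⟩
  · rintro ⟨⟨hi1, hi2⟩, hnot⟩
    refine ⟨⟨hi1, by omega⟩, ?_⟩
    rw [T.transpose_cellOf hi1 (by omega), T.transpose_cellOf (by omega) (by omega)]
    simp only
    rcases SYT.consec_or T hi1 (by omega) with h | h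
    · exact absurd ⟨⟨hi1, by omega⟩, h⟩ hnot
    · exact h

lemma desNum_transpose (T : SYT (List.replicate a b)) :
    desNum (List.replicate b a) T.transpose + desNum (List.replicate a b) T = a * b - 1 := by
  have hsum1 : (List.replicate a b).sum = a * b := sum_replicate'
  rw [desNum, desNum, desSet_transpose T, Finset.card_sdiff_of_subset]
  · rw [Nat.card_Icc]
    have hle := Finset.card_le_card (desSet_subset (T := T))
    rw [Nat.card_Icc, hsum1] at hle
    omega
  · rw [← hsum1]
    exact desSet_subset

lemma desNum_le_bound (T : SYT (List.replicate a b)) :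
    desNum (List.replicate a b) T ≤ (a - 1) * b := by
  classical
  have hsum1 : (List.replicate a b).sum = a * b := sum_replicate'
  rw [desNum]
  have := Finset.card_le_card_of_injOn (f := fun i => T.cellOf i)
    (s := desSet (List.replicate a b) T) (t := ydCells (List.replicate (a - 1) b)) ?_ ?_
  · rw [card_ydCells_replicate] at this
    exact this
  · intro i hi
    beta_reduce
    rw [Finset.mem_coe] at hi ⊢
    rw [mem_desSet_iff, hsum1] at hi
    obtain ⟨⟨hi1, hi2⟩, hlt⟩ := hi
    have hm := T.cellOf_mem hi1 (by omega)
    have hm2 := T.cellOf_mem (i := i + 1) (by omega) (by omega)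
    rw [mem_ydCells_replicate] at hm hm2 ⊢
    omega
  · intro i hi j hj hij
    simp only [Finset.mem_coe] at hi hj
    simp only at hij
    rw [mem_desSet_iff, hsum1] at hi hj
    have e1 : T.entry (T.cellOf i) = i := T.entry_cellOf hi.1.1 (by omega)
    have e2 : T.entry (T.cellOf j) = j := T.entry_cellOf hj.1.1 (by omega)
    rw [← e1, ← e2, hij]

lemma le_desNum_bound (T : SYT (List.replicate a b)) (hb : 1 ≤ b) :
    a - 1 ≤ desNum (List.replicate a b) T := by
  classical
  have hsum1 : (List.replicate a b).sum = a * b := sum_replicate'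
  rcases Nat.lt_or_ge a 2 with ha | ha
  · omega
  rw [desNum]
  have hinj := Finset.card_le_card_of_injOn (f := fun r => T.entry (r, b - 1))
    (s := Finset.range (a - 1)) (t := desSet (List.replicate a b) T) ?_ ?_
  · rw [Finset.card_range] at hinj
    exact hinj
  · intro r hr
    beta_reduce
    rw [Finset.mem_coe] at hr ⊢
    rw [Finset.mem_range] at hr
    have hmr : ((r : ℕ), (b - 1 : ℕ)) ∈ ydCells (List.replicate a b) :=
      mem_ydCells_replicate.mpr ⟨by omega, by omega⟩
    have hbig : ((a - 1 : ℕ), (b - 1 : ℕ)) ∈ ydCells (List.replicate a b) :=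
      mem_ydCells_replicate.mpr ⟨by omega, by omega⟩
    set e := T.entry (r, b - 1) with hee
    have he1 : 1 ≤ e := (T.bijOn.mapsTo hmr).1
    have heN : e < a * b := by
      have h1 : T.entry (r, b - 1) < T.entry (a - 1, b - 1) :=
        T.entry_col_strictMono (by omega) hbig
      have h2 := (T.bijOn.mapsTo hbig).2
      rw [hsum1] at h2
      omega
    have hcell : T.cellOf e = (r, b - 1) := (T.eq_cellOf hmr rfl).symm
    -- the cell of e+1 is in a row strictly below r
    have hq := T.cellOf_mem (i := e + 1) (by omega) (by omega)
    set q := T.cellOf (e + 1) with hqq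
    have hqe : T.entry q = e + 1 := T.entry_cellOf (by omega) (by omega)
    have hq' := mem_ydCells_replicate.mp hq
    have hrow : r < q.1 := by
      by_contra hcon
      push_neg at hcon
      -- q is in a row ≤ r, so its entry is at most e
      have hle1 : T.entry q ≤ T.entry (q.1, b - 1) := by
        rcases Nat.eq_or_lt_of_le (show q.2 ≤ b - 1 by omega) with h | h
        · rw [show ((q.1 : ℕ), (b - 1 : ℕ)) = q by rw [← h, Prod.mk.eta]]
        · exact le_of_lt (T.entry_row_strictMono h
            (mem_ydCells_replicate.mpr ⟨hq'.1, by omega⟩))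
      have hle2 : T.entry (q.1, b - 1) ≤ T.entry (r, b - 1) := by
        rcases Nat.eq_or_lt_of_le hcon with h | h
        · rw [h]
        · exact le_of_lt (T.entry_col_strictMono h hmr)
      omega
    rw [mem_desSet_iff, hsum1]
    refine ⟨⟨he1, by omega⟩, ?_⟩
    rw [hcell]
    exact hrow
  · intro r hr r' hr' hrr
    simp only [Finset.mem_coe, Finset.mem_range] at hr hr'
    simp only at hrr
    by_contra hne
    rcases lt_trichotomy r r' with h | h | h
    · have := T.entry_col_strictMono (c := b - 1) h
        (mem_ydCells_replicate.mpr ⟨by omega, by omega⟩)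
      omega
    · exact hne h
    · have := T.entry_col_strictMono (c := b - 1) h
        (mem_ydCells_replicate.mpr ⟨by omega, by omega⟩)
      omega

end Transpose

section Assembly

set_option linter.unusedSectionVars false
set_option linter.unusedVariables false

lemma rect_arith (a b : ℕ) (ha : 1 ≤ a) : (a - 1) * (b + 1) + b + 1 = a * b + a := by
  obtain ⟨a', rfl⟩ : ∃ a', a = a' + 1 := ⟨a - 1, by omega⟩
  simp only [Nat.add_sub_cancel]
  ring

lemma rect_arith2 (a b : ℕ) (ha : 1 ≤ a) : (a - 1) * b + b = a * b := by
  obtain ⟨a', rfl⟩ : ∃ a', a = a' + 1 := ⟨a - 1, by omega⟩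
  simp only [Nat.add_sub_cancel]
  ring

/-- The number of rectangular SYT with a given number of descents. -/
noncomputable def desCount (a b d : ℕ) : ℕ :=
  Nat.card {T : SYT (List.replicate a b) // desNum (List.replicate a b) T = d}

/-- The transposition equivalence on rectangular SYT. -/
noncomputable def sytTransposeEquiv (a b : ℕ) :
    SYT (List.replicate a b) ≃ SYT (List.replicate b a) where
  toFun := SYT.transpose
  invFun := SYT.transpose
  left_inv := SYT.transpose_transpose
  right_inv := SYT.transpose_transpose

lemma card_CS_eq_sum_choose (a b m : ℕ) (ha : 1 ≤ a) (hb : 1 ≤ b) :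
    Nat.card (CSFun a b m) = ∑ T : SYT (List.replicate a b),
      (m + (a * b - desNum (List.replicate a b) T)).choose (a * b) := by
  rw [cardCS_eq_sum a b m]
  apply Finset.sum_congr rfl
  intro T _
  have hsum : (List.replicate a b).sum = a * b := sum_replicate'
  have hdle : (desSet (List.replicate a b) T).card ≤ a * b - 1 := by
    have := Finset.card_le_card (desSet_subset (T := T))
    rw [Nat.card_Icc, hsum] at this
    omega
  rw [card_GFun (Nat.mul_pos ha hb) (by rw [← hsum]; exact desSet_subset)]
  show (m + a * b - (desSet (List.replicate a b) T).card).choose (a * b) = _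
  rw [desNum]
  congr 1
  omega

lemma desCount_sum (a b : ℕ) (F : ℕ → ℕ) :
    ∑ T : SYT (List.replicate a b), F (desNum (List.replicate a b) T)
      = ∑ d ∈ Finset.range ((a - 1) * (b + 1) + 1), desCount a b d * F d := by
  classical
  have hmaps : ∀ T ∈ (Finset.univ : Finset (SYT (List.replicate a b))),
      desNum (List.replicate a b) T ∈ Finset.range ((a - 1) * (b + 1) + 1) := by
    intro T _
    rw [Finset.mem_range]
    have h1 := desNum_le_bound T
    have h2 : (a - 1) * b ≤ (a - 1) * (b + 1) := Nat.mul_le_mul_left _ (by omega)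
    omega
  rw [← Finset.sum_fiberwise_of_maps_to hmaps
    (fun T => F (desNum (List.replicate a b) T))]
  apply Finset.sum_congr rfl
  intro d _
  rw [Finset.sum_congr rfl (fun T hT => by
    rw [(Finset.mem_filter.mp hT).2]), Finset.sum_const, smul_eq_mul]
  congr 1
  rw [desCount, Nat.card_eq_fintype_card, Fintype.card_subtype]

lemma main_identity (a b : ℕ) (ha : 1 ≤ a) (hb : 1 ≤ b) (hab : a ≤ b) (m : ℕ) :
    ∑ d ∈ Finset.range ((a - 1) * (b + 1) + 1),
        desCount a b d * (m + (a * b - d)).choose (a * b)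
      = ∑ d ∈ Finset.range ((a - 1) * (b + 1) + 1),
        desCount a b ((a - 1) * (b + 1) - d) * (m + (a * b - d)).choose (a * b) := by
  have hkey := rect_arith a b ha
  have hkey2 := rect_arith2 a b ha
  set N := a * b with hN
  set M := (a - 1) * (b + 1) with hM
  have hMN : M < N := by omega
  -- left side is the CS count
  have lhs_eq : Nat.card (CSFun a b m) = ∑ d ∈ Finset.range (M + 1),
      desCount a b d * (m + (N - d)).choose N := by
    rw [card_CS_eq_sum_choose a b m ha hb,
      desCount_sum a b (fun d => (m + (N - d)).choose N)]
  -- right side via the chain and transposition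
  have rhs_eq : Nat.card (CSFun a b m) = ∑ d ∈ Finset.range (M + 1),
      desCount a b d * (m + b - a + 1 + d).choose N := by
    rw [card_CS_chain a b m ha hb hab, card_CS_eq_sum_choose b a _ hb ha,
      show b * a = a * b from Nat.mul_comm b a,
      ← Equiv.sum_comp (sytTransposeEquiv a b)
        (fun U => (m + b - a + (a * b - desNum (List.replicate b a) U)).choose (a * b))]
    have step : ∀ T : SYT (List.replicate a b),
        (m + b - a + (a * b - desNum (List.replicate b a)
          ((sytTransposeEquiv a b) T))).choose (a * b)
        = (m + b - a + 1 + desNum (List.replicate a b) T).choose (a * b) := by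
      intro T
      have hc := desNum_transpose T
      have hle := desNum_le_bound T
      show (m + b - a + (a * b - desNum (List.replicate b a) T.transpose)).choose (a * b) = _
      congr 1
      omega
    rw [Finset.sum_congr rfl (fun T _ => step T),
      desCount_sum a b (fun d => (m + b - a + 1 + d).choose (a * b))]
  -- reflect the right side
  have reflect : ∑ d ∈ Finset.range (M + 1),
      desCount a b d * (m + b - a + 1 + d).choose N
      = ∑ d ∈ Finset.range (M + 1),
      desCount a b (M - d) * (m + (N - d)).choose N := by
    rw [← Finset.sum_range_reflect
      (fun d => desCount a b d * (m + b - a + 1 + d).choose N) (M + 1)]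
    apply Finset.sum_congr rfl
    intro d hd
    rw [Finset.mem_range] at hd
    rw [show M + 1 - 1 - d = M - d by omega]
    congr 2
    omega
  omega

/-- Extraction of coefficients from the binomial identity. -/
lemma extract_eq {M N : ℕ} (hMN : M < N) (A B : ℕ → ℕ)
    (h : ∀ m, ∑ d ∈ Finset.range (M + 1), A d * (m + (N - d)).choose N
         = ∑ d ∈ Finset.range (M + 1), B d * (m + (N - d)).choose N) :
    ∀ d, d ≤ M → A d = B d := by
  intro d
  induction d using Nat.strong_induction_on with
  | _ d ih =>
    intro hdM
    have hid := h d
    have hsplit : ∀ C : ℕ → ℕ, ∑ e ∈ Finset.range (M + 1), C e * (d + (N - e)).choose N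
        = (∑ e ∈ Finset.range d, C e * (d + (N - e)).choose N) + C d := by
      intro C
      rw [← Finset.sum_range_add_sum_Ico _ (show d ≤ M + 1 by omega)]
      have htail : ∑ e ∈ Finset.Ico d (M + 1), C e * (d + (N - e)).choose N = C d := by
        rw [Finset.sum_eq_single_of_mem d (Finset.mem_Ico.mpr ⟨le_refl d, by omega⟩)]
        · rw [show d + (N - d) = N by omega, Nat.choose_self, Nat.mul_one]
        · intro e he hne
          rw [Finset.mem_Ico] at he
          have : d + (N - e) < N := by omega
          rw [Nat.choose_eq_zero_of_lt this, Nat.mul_zero]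
      rw [htail]
    rw [hsplit A, hsplit B] at hid
    have hhead : ∑ e ∈ Finset.range d, A e * (d + (N - e)).choose N
        = ∑ e ∈ Finset.range d, B e * (d + (N - e)).choose N := by
      apply Finset.sum_congr rfl
      intro e he
      rw [Finset.mem_range] at he
      rw [ih e he (by omega)]
    omega

/-- Symmetry of the descent counts in the balanced case. -/
lemma desCount_symm_le (a b : ℕ) (ha : 1 ≤ a) (hb : 1 ≤ b) (hab : a ≤ b) :
    ∀ d, d ≤ (a - 1) * (b + 1) →
      desCount a b d = desCount a b ((a - 1) * (b + 1) - d) := by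
  have hkey := rect_arith a b ha
  have hMN : (a - 1) * (b + 1) < a * b := by omega
  exact extract_eq hMN _ _ (fun m => main_identity a b ha hb hab m)

end Assembly

section Involution

set_option linter.unusedSectionVars false
set_option linter.unusedVariables false

/-- Abstract construction of a statistic-complementing involution from
symmetry of the counting function. -/
lemma involution_of_card_symm {X : Type*} [Finite X] (f : X → ℕ) (M : ℕ)
    (hle : ∀ x, f x ≤ M)
    (hcard : ∀ d, d ≤ M → Nat.card {x // f x = d} = Nat.card {x // f x = M - d}) :
    ∃ Φ : X → X, (∀ x, Φ (Φ x) = x) ∧ ∀ x, f x + f (Φ x) = M := by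
  classical
  letI : Fintype X := Fintype.ofFinite X
  have hex : ∀ d, ∃ φ ψ : X → X, d ≤ M →
      ((∀ x, f x = d → f (φ x) = M - d ∧ ψ (φ x) = x) ∧
       (∀ y, f y = M - d → f (ψ y) = d ∧ φ (ψ y) = y)) := by
    intro d
    by_cases hd : d ≤ M
    · have hc : Fintype.card {x // f x = d} = Fintype.card {x // f x = M - d} := by
        rw [← Nat.card_eq_fintype_card, ← Nat.card_eq_fintype_card]
        exact hcard d hd
      obtain ⟨e⟩ : Nonempty ({x // f x = d} ≃ {x // f x = M - d}) :=
        ⟨Fintype.equivOfCardEq hc⟩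
      refine ⟨fun x => if h : f x = d then (e ⟨x, h⟩).1 else x,
              fun y => if h : f y = M - d then (e.symm ⟨y, h⟩).1 else y,
              fun _ => ⟨?_, ?_⟩⟩
      · intro x hx
        beta_reduce
        rw [dif_pos hx]
        have h1 : f ((e ⟨x, hx⟩).1) = M - d := (e ⟨x, hx⟩).2
        refine ⟨h1, ?_⟩
        rw [dif_pos h1]
        have h2 : (⟨(e ⟨x, hx⟩).1, h1⟩ : {x // f x = M - d}) = e ⟨x, hx⟩ :=
          Subtype.ext rfl
        rw [h2, Equiv.symm_apply_apply]
      · intro y hy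
        beta_reduce
        rw [dif_pos hy]
        have h1 : f ((e.symm ⟨y, hy⟩).1) = d := (e.symm ⟨y, hy⟩).2
        refine ⟨h1, ?_⟩
        rw [dif_pos h1]
        have h2 : (⟨(e.symm ⟨y, hy⟩).1, h1⟩ : {x // f x = d}) = e.symm ⟨y, hy⟩ :=
          Subtype.ext rfl
        rw [h2, Equiv.apply_symm_apply]
    · exact ⟨id, id, fun h => absurd h hd⟩
  choose φ ψ hφψ using hex
  refine ⟨fun x => if 2 * f x < M then φ (f x) x
    else if 2 * f x = M then x else ψ (M - f x) x, ?_, ?_⟩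
  · intro x
    beta_reduce
    by_cases h1 : 2 * f x < M
    · rw [if_pos h1]
      have hfx := ((hφψ (f x) (by omega)).1 x rfl).1
      have hinv := ((hφψ (f x) (by omega)).1 x rfl).2
      have h2 : ¬ (2 * f (φ (f x) x) < M) := by omega
      have h3 : ¬ (2 * f (φ (f x) x) = M) := by omega
      rw [if_neg h2, if_neg h3, hfx, show M - (M - f x) = f x by
        have := hle x; omega]
      exact hinv
    · by_cases h2 : 2 * f x = M
      · rw [if_neg h1, if_pos h2, if_neg h1, if_pos h2]
      · rw [if_neg h1, if_neg h2]
        have hd : M - f x ≤ M := by omega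
        have hyx : f x = M - (M - f x) := by have := hle x; omega
        have hfy := ((hφψ (M - f x) hd).2 x hyx).1
        have hinv := ((hφψ (M - f x) hd).2 x hyx).2
        have h3 : 2 * f (ψ (M - f x) x) < M := by omega
        rw [if_pos h3, hfy]
        exact hinv
  · intro x
    beta_reduce
    by_cases h1 : 2 * f x < M
    · rw [if_pos h1]
      have hfx := ((hφψ (f x) (by omega)).1 x rfl).1
      have := hle x
      omega
    · by_cases h2 : 2 * f x = M
      · rw [if_neg h1, if_pos h2]
        omega
      · rw [if_neg h1, if_neg h2]
        have hd : M - f x ≤ M := by omega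
        have hyx : f x = M - (M - f x) := by have := hle x; omega
        have hfy := ((hφψ (M - f x) hd).2 x hyx).1
        have := hle x
        omega

lemma desCount_zero_of_lt {a b d : ℕ} (hb : 1 ≤ b) (hd : d < a - 1) :
    desCount a b d = 0 := by
  have : IsEmpty {T : SYT (List.replicate a b) // desNum (List.replicate a b) T = d} := by
    constructor
    rintro ⟨T, hT⟩
    have := le_desNum_bound T hb
    omega
  rw [desCount, Nat.card_eq_zero]
  exact Or.inl this

lemma desCount_zero_of_gt {a b d : ℕ} (hd : (a - 1) * b < d) :
    desCount a b d = 0 := by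
  have : IsEmpty {T : SYT (List.replicate a b) // desNum (List.replicate a b) T = d} := by
    constructor
    rintro ⟨T, hT⟩
    have := desNum_le_bound T
    omega
  rw [desCount, Nat.card_eq_zero]
  exact Or.inl this

lemma desCount_transpose_eq (a b d : ℕ) (hd : d ≤ a * b - 1) (hab : 1 ≤ a * b) :
    desCount a b d = desCount b a (a * b - 1 - d) := by
  apply Nat.card_congr
  have hmul : b * a = a * b := Nat.mul_comm b a
  refine ⟨fun x => ⟨x.1.transpose, ?_⟩, fun y => ⟨y.1.transpose, ?_⟩, ?_, ?_⟩
  · have := desNum_transpose x.1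
    have hx := x.2
    omega
  · have := desNum_transpose y.1
    have hy := y.2
    omega
  · intro x
    apply Subtype.ext
    exact SYT.transpose_transpose x.1
  · intro y
    apply Subtype.ext
    exact SYT.transpose_transpose y.1

/-- Symmetry of the descent counts in general. -/
lemma desCount_symm (a b : ℕ) (ha : 1 ≤ a) (hb : 1 ≤ b) :
    ∀ d, d ≤ (a - 1) * (b + 1) →
      desCount a b d = desCount a b ((a - 1) * (b + 1) - d) := by
  rcases le_or_gt a b with hab | hba
  · exact desCount_symm_le a b ha hb hab
  · intro d hd
    have hK1 := rect_arith a b ha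
    have hK2 := rect_arith2 a b ha
    have hK1' := rect_arith b a hb
    have hK2' := rect_arith2 b a hb
    have hmul : b * a = a * b := Nat.mul_comm b a
    have hab1 : 1 ≤ a * b := Nat.mul_pos ha hb
    rcases Nat.lt_or_ge d (a - b) with hcase | hcase
    · -- both sides vanish
      rw [desCount_zero_of_lt hb (by omega), desCount_zero_of_gt (by omega)]
    · rcases Nat.lt_or_ge (a * b - 1) d with hcase2 | hcase2
      · -- both sides vanish
        rw [desCount_zero_of_gt (by omega), desCount_zero_of_lt hb (by omega)]
      · -- main case: transpose, reflect, transpose back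
        have h1 : desCount a b d = desCount b a (a * b - 1 - d) :=
          desCount_transpose_eq a b d hcase2 hab1
        have h2 : desCount b a (a * b - 1 - d)
            = desCount b a ((b - 1) * (a + 1) - (a * b - 1 - d)) :=
          desCount_symm_le b a hb ha (by omega) _ (by omega)
        have h3 : (b - 1) * (a + 1) - (a * b - 1 - d) = d - (a - b) := by omega
        have h4 : desCount b a (d - (a - b)) = desCount a b (b * a - 1 - (d - (a - b))) :=
          desCount_transpose_eq b a _ (by omega) (by omega)
        have h5 : b * a - 1 - (d - (a - b)) = (a - 1) * (b + 1) - d := by omega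
        rw [h1, h2, h3, h4, h5]

end Involution

/-- Theorem: there is an involution on `SYT(n^k)` complementing the number of descents
to `(k-1)(n+1)`. -/
theorem exists_involution_des (k n : ℕ) (hk : 1 ≤ k) (hn : 1 ≤ n) :
    ∃ Φ : SYT (List.replicate k n) → SYT (List.replicate k n),
      (∀ T, Φ (Φ T) = T) ∧
      (∀ T, desNum (List.replicate k n) T + desNum (List.replicate k n) (Φ T) =
        (k - 1) * (n + 1)) := by
  apply involution_of_card_symm (f := desNum (List.replicate k n)) (M := (k - 1) * (n + 1))
  · intro T
    have h1 := desNum_le_bound T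
    have h2 : (k - 1) * n ≤ (k - 1) * (n + 1) := Nat.mul_le_mul_left _ (by omega)
    omega
  · intro d hd
    exact desCount_symm k n hk hn d hd
end
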